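/- arXiv:2209.14572 — 3 statements merged into one kernel-verified Lean document; each statement's English description precedes it below -/
import Mathlib

section
/- Let α, β be C¹ functions on an interval (p₁,p₂) (−∞ ≤ p₁ < p₂ ≤ ∞) with α > 0 and β ≥ 0. Let f be a smooth solution on the rectangle (p₁,p₂) × (z₁,z₂) of the system (f² − β)·(f'_p)² − α·(1 + (f'_z)²) = 0 and α·f·f''_{zz} − β·(f'_p)² + f³·f'_p·(1 + (f'_z)²) = 0, satisfying f(p,z) > √(β(p)) on the rectangle. Then f'_p never vanishes; let ε = ±1 be its (constant) sign. Then there exists a C¹ function γ on (p₁,p₂) satisfying, on the whole rectangle, the equation f²·(εf² + γ)²·(1 + (f'_z)²) − 4α·(f² − β) = 0 and the inequalities 0 < εf² + γ ≤ 2·α^{1/2}·√(f² − β)/f. -/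
/-- Partial derivative in the second variable (`z`). -/
noncomputable def pdz (F : ℝ → ℝ → ℝ) (p z : ℝ) : ℝ := deriv (fun s => F p s) z

/-- Partial derivative in the first variable (`p`). -/
noncomputable def pdp (F : ℝ → ℝ → ℝ) (p z : ℝ) : ℝ := deriv (fun s => F s z) p

/-- Second partial derivative in the second variable. -/
noncomputable def pdzz (F : ℝ → ℝ → ℝ) (p z : ℝ) : ℝ := deriv (fun s => pdz F p s) z

/-- The real points of the (possibly infinite) open interval `(p₁, p₂)` with
`p₁, p₂ ∈ [−∞, ∞]`. -/
def erealIoo (p₁ p₂ : EReal) : Set ℝ := {p : ℝ | p₁ < (p : EReal) ∧ (p : EReal) < p₂}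

/-- Lemma 7.1, part 1: if `f` solves the system
`(f²−β)f'_p² − α(1+f'_z²) = 0`, `αff''_{zz} − βf'_p² + f³f'_p(1+f'_z²) = 0` on the
rectangle `(p₁,p₂)×(z₁,z₂)` with `f > √β`, then `f'_p` never vanishes, it has a constant
sign `ε = ±1`, and there is a C¹ function `γ(p)` with
`f²(εf²+γ)²(1+f'_z²) − 4α(f²−β) = 0` and `0 < εf²+γ ≤ 2√α √(f²−β)/f`. -/
theorem clairaut_integral_exists (p₁ p₂ : EReal) (hp : p₁ < p₂) (z₁ z₂ : ℝ)
    (α β : ℝ → ℝ)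
    (hα : ContDiffOn ℝ 1 α (erealIoo p₁ p₂)) (hβ : ContDiffOn ℝ 1 β (erealIoo p₁ p₂))
    (hαpos : ∀ p ∈ erealIoo p₁ p₂, 0 < α p) (hβnn : ∀ p ∈ erealIoo p₁ p₂, 0 ≤ β p)
    (f : ℝ → ℝ → ℝ)
    (hf : ContDiffOn ℝ (⊤ : ℕ∞) (fun v : ℝ × ℝ => f v.1 v.2)
      (erealIoo p₁ p₂ ×ˢ Set.Ioo z₁ z₂))
    (heq1 : ∀ p ∈ erealIoo p₁ p₂, ∀ z ∈ Set.Ioo z₁ z₂,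
      ((f p z) ^ 2 - β p) * (pdp f p z) ^ 2 - α p * (1 + (pdz f p z) ^ 2) = 0)
    (heq2 : ∀ p ∈ erealIoo p₁ p₂, ∀ z ∈ Set.Ioo z₁ z₂,
      α p * f p z * pdzz f p z - β p * (pdp f p z) ^ 2
        + (f p z) ^ 3 * pdp f p z * (1 + (pdz f p z) ^ 2) = 0)
    (hfβ : ∀ p ∈ erealIoo p₁ p₂, ∀ z ∈ Set.Ioo z₁ z₂, Real.sqrt (β p) < f p z) :
    (∀ p ∈ erealIoo p₁ p₂, ∀ z ∈ Set.Ioo z₁ z₂, pdp f p z ≠ 0) ∧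
    ∃ ε : ℝ, (ε = 1 ∨ ε = -1) ∧
      (∀ p ∈ erealIoo p₁ p₂, ∀ z ∈ Set.Ioo z₁ z₂, 0 < ε * pdp f p z) ∧
      ∃ γ : ℝ → ℝ, ContDiffOn ℝ 1 γ (erealIoo p₁ p₂) ∧
        ∀ p ∈ erealIoo p₁ p₂, ∀ z ∈ Set.Ioo z₁ z₂,
          (f p z) ^ 2 * (ε * (f p z) ^ 2 + γ p) ^ 2 * (1 + (pdz f p z) ^ 2)
              - 4 * α p * ((f p z) ^ 2 - β p) = 0 ∧
          0 < ε * (f p z) ^ 2 + γ p ∧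
          ε * (f p z) ^ 2 + γ p
            ≤ 2 * Real.sqrt (α p) * Real.sqrt ((f p z) ^ 2 - β p) / f p z := by
  classical
  have hUopen : IsOpen (erealIoo p₁ p₂) := by
    have h : erealIoo p₁ p₂ = Real.toEReal ⁻¹' (Set.Ioo p₁ p₂) := rfl
    rw [h]; exact isOpen_Ioo.preimage continuous_coe_real_ereal
  have hUconv : Convex ℝ (erealIoo p₁ p₂) := by
    rw [convex_iff_ordConnected]
    constructor
    intro x hx y hy w hw
    exact ⟨lt_of_lt_of_le hx.1 (EReal.coe_le_coe_iff.2 hw.1),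
      lt_of_le_of_lt (EReal.coe_le_coe_iff.2 hw.2) hy.2⟩
  obtain ⟨p₀, hp₀⟩ : (erealIoo p₁ p₂).Nonempty := by
    obtain ⟨y, h1, h2⟩ := EReal.exists_between_coe_real hp
    exact ⟨y, h1, h2⟩
  -- basic pointwise facts
  have hfpos : ∀ p ∈ erealIoo p₁ p₂, ∀ z ∈ Set.Ioo z₁ z₂, 0 < f p z := by
    intro p hp' z hz
    exact lt_of_le_of_lt (Real.sqrt_nonneg _) (hfβ p hp' z hz)
  have hf2β : ∀ p ∈ erealIoo p₁ p₂, ∀ z ∈ Set.Ioo z₁ z₂, β p < (f p z) ^ 2 := by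
    intro p hp' z hz
    have h2 : Real.sqrt (β p) ^ 2 < (f p z) ^ 2 :=
      pow_lt_pow_left₀ (hfβ p hp' z hz) (Real.sqrt_nonneg _) (by norm_num)
    rwa [Real.sq_sqrt (hβnn p hp')] at h2
  have hpdpne : ∀ p ∈ erealIoo p₁ p₂, ∀ z ∈ Set.Ioo z₁ z₂, pdp f p z ≠ 0 := by
    intro p hp' z hz hc
    have e1 := heq1 p hp' z hz
    rw [hc] at e1
    nlinarith [hαpos p hp', sq_nonneg (pdz f p z)]
  refine ⟨hpdpne, ?_⟩
  rcases le_or_gt z₂ z₁ with hz21 | hz21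
  · refine ⟨1, Or.inl rfl, ?_, 0, contDiffOn_const, ?_⟩ <;>
    · intro p hp' z hz
      exact absurd (hz.1.trans hz.2) (not_lt.2 hz21)
  -- main case : the strip is nonempty
  set F : ℝ × ℝ → ℝ := fun v => f v.1 v.2 with hFdef
  set R : Set (ℝ × ℝ) := erealIoo p₁ p₂ ×ˢ Set.Ioo z₁ z₂ with hRdef
  have hRopen : IsOpen R := hUopen.prod isOpen_Ioo
  have hRconv : Convex ℝ R := hUconv.prod (convex_Ioo z₁ z₂)
  set z₀ : ℝ := (z₁ + z₂) / 2 with hz₀def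
  have hz₀ : z₀ ∈ Set.Ioo z₁ z₂ := ⟨by simp only [hz₀def]; linarith, by simp only [hz₀def]; linarith⟩
  set G : ℝ × ℝ → ℝ := fun v => fderiv ℝ F v (1, 0) with hGdef
  set H : ℝ × ℝ → ℝ := fun v => fderiv ℝ F v (0, 1) with hHdef
  have hGsm : ContDiffOn ℝ (⊤ : ℕ∞) G R :=
    (hf.fderiv_of_isOpen hRopen (by simp)).clm_apply contDiffOn_const
  have hHsm : ContDiffOn ℝ (⊤ : ℕ∞) H R :=
    (hf.fderiv_of_isOpen hRopen (by simp)).clm_apply contDiffOn_const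
  -- slice derivatives of f
  have hdF : ∀ q ∈ R, DifferentiableAt ℝ F q := fun q hq =>
    (hf.differentiableOn (by simp)).differentiableAt (hRopen.mem_nhds hq)
  have hfp : ∀ p ∈ erealIoo p₁ p₂, ∀ z ∈ Set.Ioo z₁ z₂,
      HasDerivAt (fun s => f s z) (G (p, z)) p := by
    intro p hp' z hz
    have hline : HasDerivAt (fun s : ℝ => ((s, z) : ℝ × ℝ)) ((1 : ℝ), (0 : ℝ)) p :=
      (hasDerivAt_id p).prodMk (hasDerivAt_const p z)
    exact (hdF (p, z) ⟨hp', hz⟩).hasFDerivAt.comp_hasDerivAt p hline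
  have hfz : ∀ p ∈ erealIoo p₁ p₂, ∀ z ∈ Set.Ioo z₁ z₂,
      HasDerivAt (fun s => f p s) (H (p, z)) z := by
    intro p hp' z hz
    have hline : HasDerivAt (fun s : ℝ => ((p, s) : ℝ × ℝ)) ((0 : ℝ), (1 : ℝ)) z :=
      (hasDerivAt_const z p).prodMk (hasDerivAt_id z)
    exact (hdF (p, z) ⟨hp', hz⟩).hasFDerivAt.comp_hasDerivAt z hline
  have hpdpG : ∀ p ∈ erealIoo p₁ p₂, ∀ z ∈ Set.Ioo z₁ z₂, pdp f p z = G (p, z) :=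
    fun p hp' z hz => (hfp p hp' z hz).deriv
  have hpdzH : ∀ p ∈ erealIoo p₁ p₂, ∀ z ∈ Set.Ioo z₁ z₂, pdz f p z = H (p, z) :=
    fun p hp' z hz => (hfz p hp' z hz).deriv
  have hfzpdz : ∀ p ∈ erealIoo p₁ p₂, ∀ z ∈ Set.Ioo z₁ z₂,
      HasDerivAt (fun s => f p s) (pdz f p z) z := by
    intro p hp' z hz
    rw [hpdzH p hp' z hz]; exact hfz p hp' z hz
  -- derivative in z of the slice z ↦ pdp f p z
  have hpdp' : ∀ p ∈ erealIoo p₁ p₂, ∀ z ∈ Set.Ioo z₁ z₂,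
      HasDerivAt (fun s => pdp f p s) (fderiv ℝ G (p, z) (0, 1)) z := by
    intro p hp' z hz
    have hdG : DifferentiableAt ℝ G (p, z) :=
      (hGsm.differentiableOn (by simp)).differentiableAt (hRopen.mem_nhds ⟨hp', hz⟩)
    have hline : HasDerivAt (fun s : ℝ => ((p, s) : ℝ × ℝ)) ((0 : ℝ), (1 : ℝ)) z :=
      (hasDerivAt_const z p).prodMk (hasDerivAt_id z)
    have h1 : HasDerivAt (fun s => G (p, s)) (fderiv ℝ G (p, z) (0, 1)) z :=
      hdG.hasFDerivAt.comp_hasDerivAt z hline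
    refine h1.congr_of_eventuallyEq ?_
    filter_upwards [isOpen_Ioo.mem_nhds hz] with s hs
    exact hpdpG p hp' s hs
  -- derivative in z of the slice z ↦ pdz f p z
  have hpdz' : ∀ p ∈ erealIoo p₁ p₂, ∀ z ∈ Set.Ioo z₁ z₂,
      HasDerivAt (fun s => pdz f p s) (pdzz f p z) z := by
    intro p hp' z hz
    have hdH : DifferentiableAt ℝ H (p, z) :=
      (hHsm.differentiableOn (by simp)).differentiableAt (hRopen.mem_nhds ⟨hp', hz⟩)
    have hline : HasDerivAt (fun s : ℝ => ((p, s) : ℝ × ℝ)) ((0 : ℝ), (1 : ℝ)) z :=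
      (hasDerivAt_const z p).prodMk (hasDerivAt_id z)
    have h1 : HasDerivAt (fun s => H (p, s)) (fderiv ℝ H (p, z) (0, 1)) z :=
      hdH.hasFDerivAt.comp_hasDerivAt z hline
    have h2 : HasDerivAt (fun s => pdz f p s) (fderiv ℝ H (p, z) (0, 1)) z := by
      refine h1.congr_of_eventuallyEq ?_
      filter_upwards [isOpen_Ioo.mem_nhds hz] with s hs
      exact hpdzH p hp' s hs
    have h3 : pdzz f p z = fderiv ℝ H (p, z) (0, 1) := h2.deriv
    rw [h3]; exact h2
  -- the z-differentiated first equation and consequences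
  have hkey : ∀ p ∈ erealIoo p₁ p₂, ∀ z ∈ Set.Ioo z₁ z₂,
      α p * pdz f p z * pdp f p z + α p * f p z * (fderiv ℝ G (p, z) (0, 1))
        + (f p z) ^ 3 * pdz f p z * (pdp f p z) ^ 2 = 0 := by
    intro p hp' z hz
    have h1 := hfzpdz p hp' z hz
    have h2 := hpdp' p hp' z hz
    have h3 := hpdz' p hp' z hz
    set M := fderiv ℝ G (p, z) (0, 1) with hMdef
    have hfsq : HasDerivAt (fun s => (f p s) ^ 2) (2 * f p z * pdz f p z) z := by
      simpa using h1.fun_pow 2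
    have hpsq : HasDerivAt (fun s => (pdp f p s) ^ 2) (2 * pdp f p z * M) z := by
      simpa using h2.fun_pow 2
    have hzsq : HasDerivAt (fun s => (pdz f p s) ^ 2) (2 * pdz f p z * pdzz f p z) z := by
      simpa using h3.fun_pow 2
    have hA : HasDerivAt (fun s => ((f p s) ^ 2 - β p) * (pdp f p s) ^ 2)
        ((2 * f p z * pdz f p z) * (pdp f p z) ^ 2
          + ((f p z) ^ 2 - β p) * (2 * pdp f p z * M)) z :=
      (hfsq.sub_const (β p)).mul hpsq
    have hB : HasDerivAt (fun s => α p * (1 + (pdz f p s) ^ 2))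
        (α p * (2 * pdz f p z * pdzz f p z)) z :=
      ((hzsq.const_add 1).const_mul (α p))
    have hΦ := hA.sub hB
    have hzero : deriv (fun s => ((f p s) ^ 2 - β p) * (pdp f p s) ^ 2
        - α p * (1 + (pdz f p s) ^ 2)) z = 0 := by
      have hev : (fun s => ((f p s) ^ 2 - β p) * (pdp f p s) ^ 2
          - α p * (1 + (pdz f p s) ^ 2)) =ᶠ[nhds z] (fun _ => (0 : ℝ)) := by
        filter_upwards [isOpen_Ioo.mem_nhds hz] with s hs
        exact heq1 p hp' s hs
      rw [hev.deriv_eq, deriv_const]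
    have hE : (2 * f p z * pdz f p z) * (pdp f p z) ^ 2
        + ((f p z) ^ 2 - β p) * (2 * pdp f p z * M)
        - α p * (2 * pdz f p z * pdzz f p z) = 0 := by
      rw [← hΦ.deriv]; exact hzero
    have hmul : (α p * pdz f p z * pdp f p z + α p * f p z * M
        + (f p z) ^ 3 * pdz f p z * (pdp f p z) ^ 2)
        * (2 * ((f p z) ^ 2 - β p) * pdp f p z) = 0 := by
      linear_combination (α p * f p z) * hE + (2 * α p * pdz f p z) * (heq2 p hp' z hz)
        + (2 * pdz f p z * (f p z) ^ 3 * pdp f p z) * (heq1 p hp' z hz)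
    have h2ne : (2 * ((f p z) ^ 2 - β p) * pdp f p z) ≠ 0 :=
      mul_ne_zero (mul_ne_zero two_ne_zero (by linarith [hf2β p hp' z hz] : (f p z) ^ 2 - β p ≠ 0))
        (hpdpne p hp' z hz)
    exact (mul_eq_zero.1 hmul).resolve_right h2ne
  -- constancy in z of  2α/(f f_p) − f²
  have hconst : ∀ p ∈ erealIoo p₁ p₂, ∀ z ∈ Set.Ioo z₁ z₂,
      2 * α p / (f p z * pdp f p z) - (f p z) ^ 2
        = 2 * α p / (f p z₀ * pdp f p z₀) - (f p z₀) ^ 2 := by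
    intro p hp' z hz
    have hder : ∀ s ∈ Set.Ioo z₁ z₂,
        HasDerivAt (fun t => 2 * α p / (f p t * pdp f p t) - (f p t) ^ 2) 0 s := by
      intro s hs
      have h1 := hfzpdz p hp' s hs
      have h2 := hpdp' p hp' s hs
      set M := fderiv ℝ G (p, s) (0, 1) with hMdef
      have hd : HasDerivAt (fun t => f p t * pdp f p t)
          (pdz f p s * pdp f p s + f p s * M) s := h1.mul h2
      have hfne : f p s ≠ 0 := (hfpos p hp' s hs).ne'
      have hfpne : pdp f p s ≠ 0 := hpdpne p hp' s hs
      have hden : f p s * pdp f p s ≠ 0 := mul_ne_zero hfne hfpne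
      have h4 : HasDerivAt (fun t => 2 * α p / (f p t * pdp f p t))
          ((0 * (f p s * pdp f p s) - 2 * α p * (pdz f p s * pdp f p s + f p s * M))
            / (f p s * pdp f p s) ^ 2) s :=
        (hasDerivAt_const s (2 * α p)).div hd hden
      have h5 : HasDerivAt (fun t => (f p t) ^ 2) (2 * f p s * pdz f p s) s := by
        simpa using h1.fun_pow 2
      have h6 := h4.sub h5
      have hT := hkey p hp' s hs
      have hD : (0 * (f p s * pdp f p s) - 2 * α p * (pdz f p s * pdp f p s + f p s * M))
            / (f p s * pdp f p s) ^ 2 - 2 * f p s * pdz f p s = 0 := by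
        rw [div_sub' (pow_ne_zero 2 hden), div_eq_zero_iff]
        left
        linear_combination (-2 : ℝ) * hT
      rwa [hD] at h6
    have hdiff : DifferentiableOn ℝ (fun t => 2 * α p / (f p t * pdp f p t) - (f p t) ^ 2)
        (Set.Ioo z₁ z₂) := fun s hs => ((hder s hs).differentiableAt).differentiableWithinAt
    have hfd0 : ∀ s ∈ Set.Ioo z₁ z₂,
        fderivWithin ℝ (fun t => 2 * α p / (f p t * pdp f p t) - (f p t) ^ 2)
          (Set.Ioo z₁ z₂) s = 0 := by
      intro s hs
      rw [fderivWithin_of_isOpen isOpen_Ioo hs, (hder s hs).hasFDerivAt.fderiv]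
      ext x; simp
    exact (convex_Ioo z₁ z₂).is_const_of_fderivWithin_eq_zero hdiff hfd0 hz hz₀
  -- choice of the sign ε
  have hGne : ∀ q ∈ R, G q ≠ 0 := by
    rintro ⟨p, z⟩ hq
    rw [← hpdpG p hq.1 z hq.2]
    exact hpdpne p hq.1 z hq.2
  have hGcont : ContinuousOn G R := hGsm.continuousOn
  have hRpre : IsPreconnected R := hRconv.isPreconnected
  have hkey2 : ∀ q ∈ R, ∀ q' ∈ R, G q < 0 → 0 < G q' → False := by
    intro q hq q' hq' h1 h2
    obtain ⟨x, hx, hx0⟩ := (hRpre.intermediate_value hq hq' hGcont) ⟨h1.le, h2.le⟩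
    exact hGne x hx hx0
  have hq₀ : ((p₀, z₀) : ℝ × ℝ) ∈ R := ⟨hp₀, hz₀⟩
  obtain ⟨ε, hεcases, hsign⟩ : ∃ ε : ℝ, (ε = 1 ∨ ε = -1) ∧
      ∀ p ∈ erealIoo p₁ p₂, ∀ z ∈ Set.Ioo z₁ z₂, 0 < ε * pdp f p z := by
    by_cases hb : 0 < G (p₀, z₀)
    · refine ⟨1, Or.inl rfl, ?_⟩
      intro p hp' z hz
      rw [one_mul, hpdpG p hp' z hz]
      rcases (hGne (p, z) ⟨hp', hz⟩).lt_or_gt with h | h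
      · exact (hkey2 _ ⟨hp', hz⟩ _ hq₀ h hb).elim
      · exact h
    · have hb' : G (p₀, z₀) < 0 := (hGne _ hq₀).lt_or_gt.resolve_right hb
      refine ⟨-1, Or.inr rfl, ?_⟩
      intro p hp' z hz
      rw [hpdpG p hp' z hz]
      rcases (hGne (p, z) ⟨hp', hz⟩).lt_or_gt with h | h
      · linarith
      · exact (hkey2 _ hq₀ _ ⟨hp', hz⟩ hb' h).elim
  have hε2 : ε ^ 2 = 1 := by rcases hεcases with h | h <;> rw [h] <;> norm_num
  set γfun : ℝ → ℝ :=
    fun q => ε * (2 * α q / (f q z₀ * pdp f q z₀) - (f q z₀) ^ 2) with hγdef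
  refine ⟨ε, hεcases, hsign, γfun, ?_, ?_⟩
  · -- C¹ regularity of γ
    have hmaps : Set.MapsTo (fun q : ℝ => ((q, z₀) : ℝ × ℝ)) (erealIoo p₁ p₂) R :=
      fun q hq => ⟨hq, hz₀⟩
    have hsl : ContDiffOn ℝ (⊤ : ℕ∞) (fun q : ℝ => ((q, z₀) : ℝ × ℝ)) (erealIoo p₁ p₂) :=
      (contDiff_id.prodMk contDiff_const).contDiffOn
    have h1 : ContDiffOn ℝ (⊤ : ℕ∞) (fun q => f q z₀) (erealIoo p₁ p₂) := hf.comp hsl hmaps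
    have h2 : ContDiffOn ℝ (⊤ : ℕ∞) (fun q => G (q, z₀)) (erealIoo p₁ p₂) := hGsm.comp hsl hmaps
    have h2' : ContDiffOn ℝ (⊤ : ℕ∞) (fun q => pdp f q z₀) (erealIoo p₁ p₂) :=
      h2.congr fun q hq => hpdpG q hq z₀ hz₀
    have hne : ∀ q ∈ erealIoo p₁ p₂, f q z₀ * pdp f q z₀ ≠ 0 :=
      fun q hq => mul_ne_zero (hfpos q hq z₀ hz₀).ne' (hpdpne q hq z₀ hz₀)
    have h1' : ContDiffOn ℝ 1 (fun q => f q z₀) (erealIoo p₁ p₂) := h1.of_le (by simp)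
    have h2'' : ContDiffOn ℝ 1 (fun q => pdp f q z₀) (erealIoo p₁ p₂) := h2'.of_le (by simp)
    exact contDiffOn_const.mul
      (((contDiffOn_const.mul hα).div (h1'.mul h2'') hne).sub (h1'.pow 2))
  · -- the three pointwise claims
    intro p hp' z hz
    have hfne : f p z ≠ 0 := (hfpos p hp' z hz).ne'
    have hfpne : pdp f p z ≠ 0 := hpdpne p hp' z hz
    have hγp : γfun p = ε * (2 * α p / (f p z₀ * pdp f p z₀) - (f p z₀) ^ 2) := rfl
    have hc : ε * (f p z) ^ 2 + γfun p = ε * (2 * α p / (f p z * pdp f p z)) := by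
      rw [hγp, ← hconst p hp' z hz]; ring
    have h1' := heq1 p hp' z hz
    have hfp2pos : 0 < (pdp f p z) ^ 2 := (sq_nonneg _).lt_of_ne (Ne.symm (pow_ne_zero 2 hfpne))
    have heq0 : (f p z) ^ 2 * (ε * (f p z) ^ 2 + γfun p) ^ 2 * (1 + (pdz f p z) ^ 2)
        - 4 * α p * ((f p z) ^ 2 - β p) = 0 := by
      rw [hc]
      field_simp
      linear_combination (4 * (α p) ^ 2 * (1 + (pdz f p z) ^ 2)) * hε2
        - (4 * α p) * h1'
    have hcpos : 0 < ε * (f p z) ^ 2 + γfun p := by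
      rw [hc]
      have hrw : ε * (2 * α p / (f p z * pdp f p z))
          = 2 * α p * (ε * pdp f p z) / (f p z * (pdp f p z) ^ 2) := by
        field_simp
      rw [hrw]
      exact div_pos (by nlinarith [hαpos p hp', hsign p hp' z hz])
        (mul_pos (hfpos p hp' z hz) hfp2pos)
    refine ⟨heq0, hcpos, ?_⟩
    set c := ε * (f p z) ^ 2 + γfun p with hcdef
    have hle : (f p z * c) ^ 2 ≤ 4 * α p * ((f p z) ^ 2 - β p) := by
      nlinarith [sq_nonneg (pdz f p z), sq_nonneg (f p z * c), heq0]
    have hrhs : (2 * Real.sqrt (α p) * Real.sqrt ((f p z) ^ 2 - β p)) ^ 2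
        = 4 * α p * ((f p z) ^ 2 - β p) := by
      rw [mul_pow, mul_pow, Real.sq_sqrt (hαpos p hp').le,
        Real.sq_sqrt (by linarith [hf2β p hp' z hz] : (0:ℝ) ≤ (f p z) ^ 2 - β p)]
      ring
    have hrnn : 0 ≤ 2 * Real.sqrt (α p) * Real.sqrt ((f p z) ^ 2 - β p) := by positivity
    have h2' : f p z * c ≤ 2 * Real.sqrt (α p) * Real.sqrt ((f p z) ^ 2 - β p) := by
      nlinarith [hle, hrhs, hrnn, mul_pos (hfpos p hp' z hz) hcpos]
    rw [le_div_iff₀ (hfpos p hp' z hz)]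
    linarith [h2']
end

section
/- Let α, β, γ be C¹ functions on an interval (p₁,p₂) (−∞ ≤ p₁ < p₂ ≤ ∞) with α > 0 and β ≥ 0, and let ε = ±1. Let f be a smooth function on the rectangle (p₁,p₂) × (z₁,z₂) with f > √β, satisfying (f² − β)·(f'_p)² − α·(1 + (f'_z)²) = 0, the equation f²·(εf² + γ)²·(1 + (f'_z)²) − 4α·(f² − β) = 0, the inequalities 0 < εf² + γ ≤ 2·α^{1/2}·√(f² − β)/f, and such that ε is the sign of the (nonvanishing) derivative f'_p. Assume additionally that for every p ∈ (p₁,p₂), the function z ↦ f'_z(p,z) is not identically zero on any nonempty open subinterval of (z₁,z₂). Then f also satisfies α·f·f''_{zz} − β·(f'_p)² + f³·f'_p·(1 + (f'_z)²) = 0 on the rectangle. -/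
/-- Lemma 7.1, part 2: conversely, if `f > √β` satisfies
`(f²−β)f'_p² − α(1+f'_z²) = 0` and `f²(εf²+γ)²(1+f'_z²) − 4α(f²−β) = 0` with
`0 < εf²+γ ≤ 2√α√(f²−β)/f`, where `ε = ±1` is the sign of the nonvanishing `f'_p`, and if
for every `p` the derivative `f'_z(p,·)` is not identically zero on any nonempty open
subinterval of `(z₁,z₂)`, then `f` also satisfies
`αff''_{zz} − βf'_p² + f³f'_p(1+f'_z²) = 0`. -/
theorem clairaut_integral_converse (p₁ p₂ : EReal) (hp : p₁ < p₂) (z₁ z₂ : ℝ)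
    (α β γ : ℝ → ℝ)
    (hα : ContDiffOn ℝ 1 α (erealIoo p₁ p₂)) (hβ : ContDiffOn ℝ 1 β (erealIoo p₁ p₂))
    (hγ : ContDiffOn ℝ 1 γ (erealIoo p₁ p₂))
    (hαpos : ∀ p ∈ erealIoo p₁ p₂, 0 < α p) (hβnn : ∀ p ∈ erealIoo p₁ p₂, 0 ≤ β p)
    (ε : ℝ) (hε : ε = 1 ∨ ε = -1)
    (f : ℝ → ℝ → ℝ)
    (hf : ContDiffOn ℝ (⊤ : ℕ∞) (fun v : ℝ × ℝ => f v.1 v.2)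
      (erealIoo p₁ p₂ ×ˢ Set.Ioo z₁ z₂))
    (hfβ : ∀ p ∈ erealIoo p₁ p₂, ∀ z ∈ Set.Ioo z₁ z₂, Real.sqrt (β p) < f p z)
    (heq1 : ∀ p ∈ erealIoo p₁ p₂, ∀ z ∈ Set.Ioo z₁ z₂,
      ((f p z) ^ 2 - β p) * (pdp f p z) ^ 2 - α p * (1 + (pdz f p z) ^ 2) = 0)
    (heq9 : ∀ p ∈ erealIoo p₁ p₂, ∀ z ∈ Set.Ioo z₁ z₂,
      (f p z) ^ 2 * (ε * (f p z) ^ 2 + γ p) ^ 2 * (1 + (pdz f p z) ^ 2)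
        - 4 * α p * ((f p z) ^ 2 - β p) = 0)
    (hineq : ∀ p ∈ erealIoo p₁ p₂, ∀ z ∈ Set.Ioo z₁ z₂,
      0 < ε * (f p z) ^ 2 + γ p ∧
      ε * (f p z) ^ 2 + γ p
        ≤ 2 * Real.sqrt (α p) * Real.sqrt ((f p z) ^ 2 - β p) / f p z)
    (hsign : ∀ p ∈ erealIoo p₁ p₂, ∀ z ∈ Set.Ioo z₁ z₂, 0 < ε * pdp f p z)
    (hnondeg : ∀ p ∈ erealIoo p₁ p₂, ∀ a b : ℝ, a < b → Set.Ioo a b ⊆ Set.Ioo z₁ z₂ →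
      ∃ z ∈ Set.Ioo a b, pdz f p z ≠ 0) :
    ∀ p ∈ erealIoo p₁ p₂, ∀ z ∈ Set.Ioo z₁ z₂,
      α p * f p z * pdzz f p z - β p * (pdp f p z) ^ 2
        + (f p z) ^ 3 * pdp f p z * (1 + (pdz f p z) ^ 2) = 0 := by
  intro p hpI z hz
  have hA : 0 < α p := hαpos p hpI
  have hB : 0 ≤ β p := hβnn p hpI
  -- slice smoothness
  have hslice : ContDiffOn ℝ (⊤ : ℕ∞) (fun t => f p t) (Set.Ioo z₁ z₂) := by
    have hmap : ContDiff ℝ (⊤ : ℕ∞) (fun t : ℝ => ((p, t) : ℝ × ℝ)) :=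
      contDiff_const.prodMk contDiff_id
    exact hf.comp hmap.contDiffOn (fun t ht => ⟨hpI, ht⟩)
  have hwC : ContDiffOn ℝ (⊤ : ℕ∞) (fun t => pdz f p t) (Set.Ioo z₁ z₂) :=
    hslice.deriv_of_isOpen isOpen_Ioo (by exact_mod_cast le_top)
  have hsC : ContDiffOn ℝ (⊤ : ℕ∞) (fun t => pdzz f p t) (Set.Ioo z₁ z₂) :=
    hwC.deriv_of_isOpen isOpen_Ioo (by exact_mod_cast le_top)
  have hgd : ∀ t ∈ Set.Ioo z₁ z₂, HasDerivAt (fun u => f p u) (pdz f p t) t := by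
    intro t ht
    exact ((hslice.differentiableOn (by simp)).differentiableAt
      (isOpen_Ioo.mem_nhds ht)).hasDerivAt
  have hwd : ∀ t ∈ Set.Ioo z₁ z₂, HasDerivAt (fun u => pdz f p u) (pdzz f p t) t := by
    intro t ht
    exact ((hwC.differentiableOn (by simp)).differentiableAt
      (isOpen_Ioo.mem_nhds ht)).hasDerivAt
  have hε2 : ε ^ 2 = 1 := by rcases hε with h | h <;> rw [h] <;> norm_num
  -- positivity facts at each point
  have hgpos : ∀ t ∈ Set.Ioo z₁ z₂, 0 < f p t := fun t ht =>
    lt_of_le_of_lt (Real.sqrt_nonneg _) (hfβ p hpI t ht)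
  -- key identity: f * Q * f'_p = 2 α ε at every point
  have hkey : ∀ t ∈ Set.Ioo z₁ z₂,
      f p t * (ε * (f p t) ^ 2 + γ p) * pdp f p t = 2 * α p * ε := by
    intro t ht
    have e1 := heq1 p hpI t ht
    have e2 := heq9 p hpI t ht
    have hQ := (hineq p hpI t ht).1
    have hg := hgpos t ht
    have hW : (0:ℝ) < 1 + (pdz f p t) ^ 2 := by positivity
    have hεu := hsign p hpI t ht
    have hfac : ((f p t) ^ 2 * (ε * (f p t) ^ 2 + γ p) ^ 2 * (pdp f p t) ^ 2
        - 4 * (α p) ^ 2) * (1 + (pdz f p t) ^ 2) = 0 := by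
      linear_combination (pdp f p t) ^ 2 * e2 + 4 * α p * e1
    have h4 : (f p t) ^ 2 * (ε * (f p t) ^ 2 + γ p) ^ 2 * (pdp f p t) ^ 2
        - 4 * (α p) ^ 2 = 0 := by
      rcases mul_eq_zero.mp hfac with h | h
      · exact h
      · exact absurd h (ne_of_gt hW)
    have hfac2 : (f p t * (ε * (f p t) ^ 2 + γ p) * pdp f p t - 2 * α p * ε) *
        (f p t * (ε * (f p t) ^ 2 + γ p) * pdp f p t + 2 * α p * ε) = 0 := by
      linear_combination h4 - 4 * (α p) ^ 2 * hε2
    have hpos2 : 0 < ε * (f p t * (ε * (f p t) ^ 2 + γ p) * pdp f p t + 2 * α p * ε) := by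
      nlinarith [mul_pos (mul_pos hg hQ) hεu]
    rcases mul_eq_zero.mp hfac2 with h | h
    · linarith [sub_eq_zero.mp h]
    · rw [h] at hpos2; simp at hpos2
  -- the auxiliary continuous function G and its vanishing
  have hGall : ∀ t ∈ Set.Ioo z₁ z₂,
      α p * (f p t) ^ 3 * (ε * (f p t) ^ 2 + γ p) ^ 2 * pdzz f p t
        - 4 * (α p) ^ 2 * β p
        + 2 * α p * ε * (f p t) ^ 4 * (ε * (f p t) ^ 2 + γ p) * (1 + (pdz f p t) ^ 2) = 0 := by
    have hGzero : ∀ t ∈ Set.Ioo z₁ z₂, pdz f p t ≠ 0 →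
        α p * (f p t) ^ 3 * (ε * (f p t) ^ 2 + γ p) ^ 2 * pdzz f p t
          - 4 * (α p) ^ 2 * β p
          + 2 * α p * ε * (f p t) ^ 4 * (ε * (f p t) ^ 2 + γ p) * (1 + (pdz f p t) ^ 2) = 0 := by
      intro t ht htw
      have hg := hgd t ht
      have hw' := hwd t ht
      have hchain := (((hg.pow 2).mul
          ((((hg.pow 2).const_mul ε).add_const (γ p)).pow 2)).mul
          ((hw'.pow 2).const_add 1)).sub
          (((hg.pow 2).sub_const (β p)).const_mul (4 * α p))
      have hH : HasDerivAt (fun u => (f p u) ^ 2 * (ε * (f p u) ^ 2 + γ p) ^ 2 *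
            (1 + (pdz f p u) ^ 2) - 4 * α p * ((f p u) ^ 2 - β p))
          (2 * f p t * pdz f p t * (ε * (f p t) ^ 2 + γ p) ^ 2 * (1 + (pdz f p t) ^ 2)
            + 4 * ε * (f p t) ^ 3 * pdz f p t * (ε * (f p t) ^ 2 + γ p) * (1 + (pdz f p t) ^ 2)
            + 2 * (f p t) ^ 2 * (ε * (f p t) ^ 2 + γ p) ^ 2 * pdz f p t * pdzz f p t
            - 8 * α p * f p t * pdz f p t) t := by
        refine (hchain.congr_deriv ?_).congr_of_eventuallyEq (Filter.Eventually.of_forall fun u => rfl)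
        norm_num only [Pi.pow_apply, Pi.mul_apply]
        ring
      have hev : (fun u => (f p u) ^ 2 * (ε * (f p u) ^ 2 + γ p) ^ 2 *
            (1 + (pdz f p u) ^ 2) - 4 * α p * ((f p u) ^ 2 - β p))
          =ᶠ[nhds t] fun _ => (0:ℝ) :=
        Filter.eventuallyEq_of_mem (isOpen_Ioo.mem_nhds ht) (fun u hu => heq9 p hpI u hu)
      have hD : (2 * f p t * pdz f p t * (ε * (f p t) ^ 2 + γ p) ^ 2 * (1 + (pdz f p t) ^ 2)
            + 4 * ε * (f p t) ^ 3 * pdz f p t * (ε * (f p t) ^ 2 + γ p) * (1 + (pdz f p t) ^ 2)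
            + 2 * (f p t) ^ 2 * (ε * (f p t) ^ 2 + γ p) ^ 2 * pdz f p t * pdzz f p t
            - 8 * α p * f p t * pdz f p t) = 0 := by
        rw [← hH.deriv, hev.deriv_eq, deriv_const]
      have h2w : (2 * pdz f p t) *
          (α p * (f p t) ^ 3 * (ε * (f p t) ^ 2 + γ p) ^ 2 * pdzz f p t
            - 4 * (α p) ^ 2 * β p
            + 2 * α p * ε * (f p t) ^ 4 * (ε * (f p t) ^ 2 + γ p) * (1 + (pdz f p t) ^ 2)) = 0 := by
        linear_combination (α p * f p t) * hD - (2 * pdz f p t * α p) * heq9 p hpI t ht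
      rcases mul_eq_zero.mp h2w with h | h
      · exact absurd h (by simpa using htw)
      · exact h
    intro t ht
    by_contra hne
    have hGcont : ContinuousOn (fun u => α p * (f p u) ^ 3 * (ε * (f p u) ^ 2 + γ p) ^ 2 * pdzz f p u
        - 4 * (α p) ^ 2 * β p
        + 2 * α p * ε * (f p u) ^ 4 * (ε * (f p u) ^ 2 + γ p) * (1 + (pdz f p u) ^ 2))
        (Set.Ioo z₁ z₂) := by
      have c1 : ContinuousOn (fun u => f p u) (Set.Ioo z₁ z₂) := hslice.continuousOn
      have c2 : ContinuousOn (fun u => pdz f p u) (Set.Ioo z₁ z₂) := hwC.continuousOn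
      have c3 : ContinuousOn (fun u => pdzz f p u) (Set.Ioo z₁ z₂) := hsC.continuousOn
      exact ((((continuousOn_const.mul (c1.pow 3)).mul
          (((continuousOn_const.mul (c1.pow 2)).add continuousOn_const).pow 2)).mul c3).sub
          continuousOn_const).add
          (((continuousOn_const.mul (c1.pow 4)).mul
            ((continuousOn_const.mul (c1.pow 2)).add continuousOn_const)).mul
            (continuousOn_const.add (c2.pow 2)))
    have hcat : ContinuousAt (fun u => α p * (f p u) ^ 3 * (ε * (f p u) ^ 2 + γ p) ^ 2 * pdzz f p u
        - 4 * (α p) ^ 2 * β p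
        + 2 * α p * ε * (f p u) ^ 4 * (ε * (f p u) ^ 2 + γ p) * (1 + (pdz f p u) ^ 2)) t :=
      hGcont.continuousAt (isOpen_Ioo.mem_nhds ht)
    have hev2 := hcat.eventually_ne hne
    rw [Metric.eventually_nhds_iff] at hev2
    obtain ⟨δ, hδ, hball⟩ := hev2
    set a : ℝ := max (t - δ / 2) ((z₁ + t) / 2) with ha
    set b : ℝ := min (t + δ / 2) ((t + z₂) / 2) with hb
    have hat : a < t := by
      apply max_lt <;> [linarith; (have := ht.1; linarith)]
    have htb : t < b := by
      apply lt_min <;> [linarith; (have := ht.2; linarith)]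
    have hsub : Set.Ioo a b ⊆ Set.Ioo z₁ z₂ := by
      intro u hu
      constructor
      · have h1 : (z₁ + t) / 2 ≤ a := le_max_right _ _
        have := ht.1; have := hu.1; linarith
      · have h1 : b ≤ (t + z₂) / 2 := min_le_right _ _
        have := ht.2; have := hu.2; linarith
    obtain ⟨u, hu, huw⟩ := hnondeg p hpI a b (hat.trans htb) hsub
    have huIoo := hsub hu
    have hGu := hGzero u huIoo huw
    have hdist : dist u t < δ := by
      rw [Real.dist_eq, abs_lt]
      have h1 : t - δ / 2 ≤ a := le_max_left _ _
      have h2 : b ≤ t + δ / 2 := min_le_left _ _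
      have := hu.1; have := hu.2
      constructor <;> linarith
    exact hball hdist hGu
  -- conclude at (p, z)
  have hGz := hGall z hz
  have hk := hkey z hz
  have hQ := (hineq p hpI z hz).1
  have hg := hgpos z hz
  have hmul : (α p * f p z * pdzz f p z - β p * (pdp f p z) ^ 2
        + (f p z) ^ 3 * pdp f p z * (1 + (pdz f p z) ^ 2)) *
      ((f p z) ^ 2 * (ε * (f p z) ^ 2 + γ p) ^ 2) = 0 := by
    linear_combination hGz
      + ((f p z) ^ 4 * (ε * (f p z) ^ 2 + γ p) * (1 + (pdz f p z) ^ 2)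
          - β p * (f p z * (ε * (f p z) ^ 2 + γ p) * pdp f p z + 2 * α p * ε)) * hk
      - 4 * (α p) ^ 2 * β p * hε2
  rcases mul_eq_zero.mp hmul with h | h
  · exact h
  · exact absurd h (by positivity)
end

section
/- Let α, β, γ be C¹ functions on an interval (p₁,p₂) with α > 0 and β ≥ 0, let ε = ±1, and let f be a smooth solution on the rectangle (p₁,p₂) × (z₁,z₂) of the system (f²−β)·(f'_p)² − α·(1+(f'_z)²) = 0 and f²·(εf²+γ)²·(1+(f'_z)²) − 4α·(f²−β) = 0, satisfying f > √β on the rectangle (so that f'_p never vanishes and ε is its sign). Suppose there is a point (p₀,z₀) ∈ (p₁,p₂) × (z₁,z₂) with f'_z(p₀,z₀) = 0 and f''_{zz}(p₀,z₀) ≠ 0. Then there exists δ > 0 such that f is symmetric with respect to z₀ near p₀: f(p,z) = f(p, 2z₀ − z) for all p ∈ (p₀−δ, p₀+δ) and all z with both z and 2z₀−z in (z₁,z₂). In particular f'_z(p, z₀) = 0 for all p ∈ (p₀−δ, p₀+δ), and f extends to a solution on (p₀−δ,p₀+δ) × (z₀−Δ, z₀+Δ) with (z₁,z₂) ⊆ (z₀−Δ,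 z₀+Δ). -/
section AuxLemmas
open Set Filter Topology

/-- Slice derivative in second variable. -/
lemma hasDerivAt_slice2 {F : ℝ × ℝ → ℝ} {L : ℝ × ℝ →L[ℝ] ℝ} {p z : ℝ}
    (hF : HasFDerivAt F L (p, z)) :
    HasDerivAt (fun s => F (p, s)) (L (0, 1)) z := by
  have h1 : HasDerivAt (fun s : ℝ => ((p : ℝ), s)) ((0 : ℝ), (1 : ℝ)) z :=
    (hasDerivAt_const z p).prodMk (hasDerivAt_id z)
  exact hF.comp_hasDerivAt z h1

lemma hasDerivAt_slice1 {F : ℝ × ℝ → ℝ} {L : ℝ × ℝ →L[ℝ] ℝ} {p z : ℝ}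
    (hF : HasFDerivAt F L (p, z)) :
    HasDerivAt (fun s => F (s, z)) (L (1, 0)) p := by
  have h1 : HasDerivAt (fun s : ℝ => (s, (z : ℝ))) ((1 : ℝ), (0 : ℝ)) p :=
    (hasDerivAt_id p).prodMk (hasDerivAt_const p z)
  exact hF.comp_hasDerivAt p h1

/-- Clopen bootstrap: two functions agreeing at a point of an open interval, that agree
locally around any point of agreement, agree on the whole interval. -/
lemma eqOn_of_local {E : Type*} [TopologicalSpace E] [T2Space E] {a b t₀ : ℝ}
    {γ₁ γ₂ : ℝ → E} (ht₀ : t₀ ∈ Ioo a b)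
    (hc₁ : ∀ t ∈ Ioo a b, ContinuousAt γ₁ t) (hc₂ : ∀ t ∈ Ioo a b, ContinuousAt γ₂ t)
    (hloc : ∀ t ∈ Ioo a b, γ₁ t = γ₂ t → γ₁ =ᶠ[𝓝 t] γ₂)
    (heq : γ₁ t₀ = γ₂ t₀) : EqOn γ₁ γ₂ (Ioo a b) := by
  haveI : PreconnectedSpace (Ioo a b) := Subtype.preconnectedSpace isPreconnected_Ioo
  set S : Set (Ioo a b) := {x | γ₁ (x : ℝ) = γ₂ (x : ℝ)} with hS
  have hclosed : IsClosed S := by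
    apply isClosed_eq
    · exact continuous_iff_continuousAt.2 fun x =>
        (hc₁ x x.2).comp continuous_subtype_val.continuousAt
    · exact continuous_iff_continuousAt.2 fun x =>
        (hc₂ x x.2).comp continuous_subtype_val.continuousAt
  have hopen : IsOpen S := by
    rw [isOpen_iff_mem_nhds]
    intro x hx
    have h := hloc x x.2 hx
    have : {y : ℝ | γ₁ y = γ₂ y} ∈ 𝓝 (x : ℝ) := h
    exact continuous_subtype_val.continuousAt this
  have : S = univ := IsClopen.eq_univ ⟨hclosed, hopen⟩ ⟨⟨t₀, ht₀⟩, heq⟩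
  intro t ht
  have : (⟨t, ht⟩ : Ioo a b) ∈ S := this ▸ mem_univ _
  exact this

/-- Local uniqueness for an autonomous ODE with a `C¹` vector field. -/
lemma ode_local_unique {E : Type*} [NormedAddCommGroup E] [NormedSpace ℝ E]
    {v : E → E} {γ₁ γ₂ : ℝ → E} {t₀ : ℝ}
    (hv : ContDiffAt ℝ 1 v (γ₁ t₀))
    (h₁ : ∀ᶠ t in 𝓝 t₀, HasDerivAt γ₁ (v (γ₁ t)) t)
    (h₂ : ∀ᶠ t in 𝓝 t₀, HasDerivAt γ₂ (v (γ₂ t)) t)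
    (heq : γ₁ t₀ = γ₂ t₀) : γ₁ =ᶠ[𝓝 t₀] γ₂ := by
  obtain ⟨K, s, hs, hlip⟩ := hv.exists_lipschitzOnWith
  have hc₁ : ContinuousAt γ₁ t₀ := h₁.self_of_nhds.continuousAt
  have hc₂ : ContinuousAt γ₂ t₀ := h₂.self_of_nhds.continuousAt
  have hm₁ : ∀ᶠ t in 𝓝 t₀, γ₁ t ∈ s := hc₁ hs
  have hm₂ : ∀ᶠ t in 𝓝 t₀, γ₂ t ∈ s := by
    apply hc₂ ; rw [← heq] at *; exact hs
  exact ODE_solution_unique_of_eventually (v := fun _ => v) (s := fun _ => s)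
    (Filter.Eventually.of_forall fun _ => hlip) (h₁.and hm₁) (h₂.and hm₂) heq

/-- Global uniqueness on an open interval for an autonomous ODE with vector field that is
`C¹` along the (first) solution. -/
lemma ode_eqOn_of_C1 {E : Type*} [NormedAddCommGroup E] [NormedSpace ℝ E]
    {v : E → E} {γ₁ γ₂ : ℝ → E} {a b t₀ : ℝ} (ht₀ : t₀ ∈ Ioo a b)
    (hv : ∀ t ∈ Ioo a b, ContDiffAt ℝ 1 v (γ₁ t))
    (h₁ : ∀ t ∈ Ioo a b, HasDerivAt γ₁ (v (γ₁ t)) t)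
    (h₂ : ∀ t ∈ Ioo a b, HasDerivAt γ₂ (v (γ₂ t)) t)
    (heq : γ₁ t₀ = γ₂ t₀) : EqOn γ₁ γ₂ (Ioo a b) := by
  apply eqOn_of_local ht₀ (fun t ht => (h₁ t ht).continuousAt)
    (fun t ht => (h₂ t ht).continuousAt) _ heq
  intro t ht hteq
  have hnhds : Ioo a b ∈ 𝓝 t := isOpen_Ioo.mem_nhds ht
  exact ode_local_unique (hv t ht)
    (by filter_upwards [hnhds] with s hs using h₁ s hs)
    (by filter_upwards [hnhds] with s hs using h₂ s hs) hteq

/-- A scalar function satisfying a linear ODE `w' = K·w` on an open interval, with continuous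
coefficient and vanishing at one point, vanishes identically. -/
lemma linear_ode_zero {K w : ℝ → ℝ} {a b t₀ : ℝ} (ht₀ : t₀ ∈ Ioo a b)
    (hK : ∀ t ∈ Ioo a b, ContinuousAt K t)
    (hw : ∀ t ∈ Ioo a b, HasDerivAt w (K t * w t) t)
    (h0 : w t₀ = 0) : ∀ t ∈ Ioo a b, w t = 0 := by
  have : EqOn w (fun _ => (0 : ℝ)) (Ioo a b) := by
    apply eqOn_of_local ht₀ (fun t ht => (hw t ht).continuousAt)
      (fun _ _ => continuousAt_const) _ h0
    intro t ht hteq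
    -- clamp the coefficient
    set C : ℝ := |K t| + 1 with hC
    have hCpos : 0 < C := by positivity
    set Kc : ℝ → ℝ := fun s => max (-C) (min C (K s)) with hKc
    have hKcb : ∀ s, |Kc s| ≤ C := by
      intro s
      rw [abs_le]
      constructor
      · exact le_max_left _ _
      · exact max_le (by linarith) (min_le_left _ _)
    have hlip : ∀ s : ℝ, LipschitzWith C.toNNReal (fun y => Kc s * y) := by
      intro s
      apply LipschitzWith.of_dist_le_mul
      intro x y
      rw [Real.dist_eq, Real.dist_eq, ← mul_sub, abs_mul]
      have : (C.toNNReal : ℝ) = C := Real.coe_toNNReal _ hCpos.le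
      rw [this]
      exact mul_le_mul_of_nonneg_right (hKcb s) (abs_nonneg _)
    have hKev : ∀ᶠ s in 𝓝 t, Kc s = K s := by
      have : ∀ᶠ s in 𝓝 t, K s ∈ Ioo (-C) C := by
        apply (hK t ht).preimage_mem_nhds
        apply isOpen_Ioo.mem_nhds
        constructor <;> [skip; skip] <;> cases abs_le.1 (le_refl |K t|) <;> 
          simp only [hC] <;> linarith [neg_abs_le (K t), le_abs_self (K t)]
      filter_upwards [this] with s hs
      rw [hKc]
      simp only []
      rw [min_eq_right hs.2.le, max_eq_right (by linarith [hs.1])]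
    have hnhds : Ioo a b ∈ 𝓝 t := isOpen_Ioo.mem_nhds ht
    have := ODE_solution_unique_of_eventually (v := fun s y => Kc s * y)
      (s := fun _ => (univ : Set ℝ)) (Filter.Eventually.of_forall fun s => (hlip s).lipschitzOnWith)
      (f := w) (g := fun _ => 0) ?_ ?_ hteq
    · exact this
    · filter_upwards [hKev, hnhds] with s hs hs2
      exact ⟨hs ▸ hw s hs2, mem_univ _⟩
    · filter_upwards [] with s
      simpa using hasDerivAt_const s (0 : ℝ)
  intro t ht; exact this ht

lemma eq_of_closure {g : ℝ → ℝ} {s : Set ℝ} {z c : ℝ} (hg : ContinuousAt g z)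
    (hz : z ∈ closure s) (h : ∀ x ∈ s, g x = c) : g z = c := by
  haveI := mem_closure_iff_nhdsWithin_neBot.1 hz
  have h1 : Tendsto g (𝓝[s] z) (𝓝 (g z)) := hg.continuousWithinAt.tendsto
  have h2 : Tendsto g (𝓝[s] z) (𝓝 c) := by
    have hev : g =ᶠ[𝓝[s] z] fun _ => c :=
      eventually_nhdsWithin_of_forall h
    exact (tendsto_congr' hev).2 tendsto_const_nhds
  exact tendsto_nhds_unique h1 h2

section FlatRel

variable {a b : ℝ} {f u u' H : ℝ → ℝ}

/-- On the closure of the set where `u ≠ 0`, the relation `2u' = H ∘ f` holds. -/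
lemma closure_rel
    (hf : ∀ z ∈ Ioo a b, HasDerivAt f (u z) z)
    (hu'c : ∀ z ∈ Ioo a b, ContinuousAt u' z)
    (hHc : ∀ z ∈ Ioo a b, ContinuousAt H (f z))
    (hkey : ∀ z ∈ Ioo a b, u z * (2 * u' z - H (f z)) = 0)
    {z : ℝ} (hz : z ∈ Ioo a b)
    (hcl : z ∈ closure {s | s ∈ Ioo a b ∧ u s ≠ 0}) : 2 * u' z = H (f z) := by
  have hG : ContinuousAt (fun s => 2 * u' s - H (f s)) z := by
    apply ContinuousAt.sub
    · exact (hu'c z hz).const_mul 2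
    · exact (hHc z hz).comp (hf z hz).continuousAt
  have := eq_of_closure (c := 0) hG hcl ?_
  · linarith [this]
  · intro x hx
    have := hkey x hx.1
    rcases mul_eq_zero.1 this with h | h
    · exact absurd h hx.2
    · exact h

/-- One-sided flat lemma: if `u` vanishes near `z` but not identically to the right,
then `H (f z) = 0`. -/
lemma flat_right
    (hf : ∀ z ∈ Ioo a b, HasDerivAt f (u z) z)
    (hu : ∀ z ∈ Ioo a b, HasDerivAt u (u' z) z)
    (hu'c : ∀ z ∈ Ioo a b, ContinuousAt u' z)
    (hHc : ∀ z ∈ Ioo a b, ContinuousAt H (f z))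
    (hkey : ∀ z ∈ Ioo a b, u z * (2 * u' z - H (f z)) = 0)
    {z zw η : ℝ} (hz : z ∈ Ioo a b) (hzw : zw ∈ Ioo a b) (hlt : z < zw) (hw : u zw ≠ 0)
    (hη : 0 < η) (hsub : Ioo (z - η) (z + η) ⊆ Ioo a b)
    (hflat : ∀ s ∈ Ioo (z - η) (z + η), u s = 0) : H (f z) = 0 := by
  set A : Set ℝ := {t | t ∈ Ico z b ∧ ∀ s ∈ Icc z t, u s = 0} with hA
  have hzA : z ∈ A := ⟨⟨le_refl z, hz.2⟩, fun s hs => by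
    have : s = z := le_antisymm hs.2 hs.1
    exact this ▸ hflat z ⟨by linarith, by linarith⟩⟩
  have hAzw : ∀ t ∈ A, t < zw := by
    intro t ht
    by_contra hc
    push_neg at hc
    exact hw (ht.2 zw ⟨hlt.le, hc⟩)
  have hbdd : BddAbove A := ⟨zw, fun t ht => (hAzw t ht).le⟩
  set c : ℝ := sSup A with hc
  have hne : A.Nonempty := ⟨z, hzA⟩
  have hczw : c ≤ zw := csSup_le hne fun t ht => (hAzw t ht).le
  -- a point strictly above z in A
  have hup : min (z + η / 2) ((z + zw) / 2) ∈ A := by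
    refine ⟨⟨le_min (by linarith) (by linarith), ?_⟩, ?_⟩
    · calc min (z + η / 2) ((z + zw) / 2) ≤ (z + zw) / 2 := min_le_right _ _
        _ < zw := by linarith
        _ < b := hzw.2
    · intro s hs
      apply hflat
      constructor
      · linarith [hs.1]
      · calc s ≤ min (z + η / 2) ((z + zw) / 2) := hs.2
          _ ≤ z + η / 2 := min_le_left _ _
          _ < z + η := by linarith
  have hcz : z < c := lt_of_lt_of_le (lt_min (by linarith) (by linarith)) (le_csSup hbdd hup)
  have hcIoo : c ∈ Ioo a b := ⟨lt_trans hz.1 hcz, lt_of_le_of_lt hczw hzw.2⟩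
  -- u vanishes on Ico z c
  have hu0 : ∀ s ∈ Ico z c, u s = 0 := by
    intro s hs
    obtain ⟨t, htA, hst⟩ := exists_lt_of_lt_csSup hne hs.2
    exact htA.2 s ⟨hs.1, hst.le⟩
  have hIccsub : Icc z c ⊆ Ioo a b := fun s hs => ⟨lt_of_lt_of_le hz.1 hs.1,
    lt_of_le_of_lt hs.2 hcIoo.2⟩
  have huc0 : u c = 0 := by
    apply eq_of_closure (hu c hcIoo).continuousAt ?_ hu0
    rw [closure_Ico (ne_of_lt hcz)]
    exact ⟨hcz.le, le_refl c⟩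
  -- u' vanishes on Ioo z c and at c
  have hu'0 : ∀ s ∈ Ioo z c, u' s = 0 := by
    intro s hs
    have hsub2 : Ioo z c ⊆ Ioo a b := fun t ht => hIccsub (Ioo_subset_Icc_self ht)
    have h0 : HasDerivAt u 0 s := by
      apply (hasDerivAt_const s (0:ℝ)).congr_of_eventuallyEq
      filter_upwards [isOpen_Ioo.mem_nhds hs] with t ht
      exact hu0 t (Ico_subset_Ico_right (le_refl c) ⟨ht.1.le, ht.2⟩)
    exact (h0.unique (hu s (hsub2 hs))).symm
  have hu'c0 : u' c = 0 := by
    apply eq_of_closure (hu'c c hcIoo) ?_ hu'0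
    rw [closure_Ioo (ne_of_lt hcz)]
    exact ⟨hcz.le, le_refl c⟩
  -- c is in the closure of the set {u ≠ 0}
  have hccl : c ∈ closure {s | s ∈ Ioo a b ∧ u s ≠ 0} := by
    rw [mem_closure_iff]
    intro V hV hcV
    obtain ⟨η', hη', hball⟩ := Metric.isOpen_iff.1 hV c hcV
    by_contra hempty
    push_neg at hempty
    -- then u ≡ 0 slightly beyond c, contradicting c = sSup A
    set η'' : ℝ := min (η' / 2) ((b - c) / 2) with hη''
    have hη''pos : 0 < η'' := lt_min (by linarith) (by linarith [hcIoo.2])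
    have : c + η'' ∈ A := by
      refine ⟨⟨by linarith, ?_⟩, ?_⟩
      · calc c + η'' ≤ c + (b - c) / 2 := by linarith [min_le_right (η'/2) ((b-c)/2)]
          _ < b := by linarith [hcIoo.2]
      · intro s hs
        rcases lt_or_ge s c with h | h
        · exact hu0 s ⟨hs.1, h⟩
        rcases eq_or_lt_of_le h with h' | h'
        · exact h' ▸ huc0
        · -- s ∈ (c, c+η'']; must be zero, else contradiction with hempty
          by_contra hs0
          have hsV : s ∈ V := by
            apply hball
            rw [Metric.mem_ball, Real.dist_eq, abs_of_pos (by linarith)]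
            calc s - c ≤ η'' := by linarith [hs.2]
              _ ≤ η' / 2 := min_le_left _ _
              _ < η' := by linarith
          have hsm : s ∈ {s | s ∈ Ioo a b ∧ u s ≠ 0} := by
            refine ⟨⟨lt_trans hcIoo.1 h', ?_⟩, hs0⟩
            calc s ≤ c + η'' := hs.2
              _ ≤ c + (b - c)/2 := by linarith [min_le_right (η'/2) ((b-c)/2)]
              _ < b := by linarith [hcIoo.2]
          have : s ∈ V ∩ {s | s ∈ Ioo a b ∧ u s ≠ 0} := ⟨hsV, hsm⟩
          rw [hempty] at this
          exact this
    have := le_csSup hbdd this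
    linarith
  -- relation at c
  have hrel := closure_rel hf hu'c hHc hkey hcIoo hccl
  rw [hu'c0] at hrel
  -- f is constant on [z, c]
  have hfzc : f c = f z := by
    apply constant_of_has_deriv_right_zero (f := f) (a := z) (b := c)
    · exact fun s hs => ((hf s (hIccsub hs)).continuousAt).continuousWithinAt
    · intro x hx
      have := (hf x (hIccsub (Ico_subset_Icc_self hx))).hasDerivWithinAt (s := Ici x)
      rwa [hu0 x hx] at this
    · exact ⟨hcz.le, le_refl c⟩
  rw [hfzc] at hrel
  linarith
end FlatRel

/-- Main 1-D lemma: if `u·(2u' − H∘f) = 0` on an interval with `f' = u`, `u' = (u)'`,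
and `u` is not identically zero, then `2u' = H∘f` everywhere on the interval. -/
lemma flat_rel {a b : ℝ} {f u u' H : ℝ → ℝ}
    (hf : ∀ z ∈ Set.Ioo a b, HasDerivAt f (u z) z)
    (hu : ∀ z ∈ Set.Ioo a b, HasDerivAt u (u' z) z)
    (hu'c : ∀ z ∈ Set.Ioo a b, ContinuousAt u' z)
    (hHc : ∀ z ∈ Set.Ioo a b, ContinuousAt H (f z))
    (hkey : ∀ z ∈ Set.Ioo a b, u z * (2 * u' z - H (f z)) = 0)
    (hex : ∃ zw ∈ Set.Ioo a b, u zw ≠ 0) :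
    ∀ z ∈ Set.Ioo a b, 2 * u' z = H (f z) := by
  intro z hz
  by_cases hcl : z ∈ closure {s | s ∈ Ioo a b ∧ u s ≠ 0}
  · exact closure_rel hf hu'c hHc hkey hz hcl
  · -- flat near z
    rw [mem_closure_iff] at hcl
    push_neg at hcl
    obtain ⟨V, hVopen, hzV, hVempty⟩ := hcl
    obtain ⟨η₀, hη₀, hball⟩ := Metric.isOpen_iff.1 hVopen z hzV
    set η : ℝ := min (η₀ / 2) (min ((z - a) / 2) ((b - z) / 2)) with hη
    have hηpos : 0 < η := lt_min (by linarith) (lt_min (by linarith [hz.1]) (by linarith [hz.2]))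
    have hsub : Ioo (z - η) (z + η) ⊆ Ioo a b := by
      intro s hs
      have h1 : η ≤ (z - a) / 2 := le_trans (min_le_right _ _) (min_le_left _ _)
      have h2 : η ≤ (b - z) / 2 := le_trans (min_le_right _ _) (min_le_right _ _)
      exact ⟨by linarith [hs.1], by linarith [hs.2]⟩
    have hflat : ∀ s ∈ Ioo (z - η) (z + η), u s = 0 := by
      intro s hs
      by_contra hs0
      have hsV : s ∈ V := by
        apply hball
        rw [Metric.mem_ball, Real.dist_eq, abs_sub_lt_iff]
        have : η ≤ η₀ / 2 := min_le_left _ _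
        constructor <;> [linarith [hs.2]; linarith [hs.1]]
      have : s ∈ V ∩ {s | s ∈ Ioo a b ∧ u s ≠ 0} := ⟨hsV, ⟨hsub hs, hs0⟩⟩
      rw [hVempty] at this
      exact this
    have hu'z : u' z = 0 := by
      have h0 : HasDerivAt u 0 z := by
        apply (hasDerivAt_const z (0:ℝ)).congr_of_eventuallyEq
        filter_upwards [isOpen_Ioo.mem_nhds (show z ∈ Ioo (z-η) (z+η) by
          constructor <;> linarith)] with t ht
        exact hflat t ht
      exact (h0.unique (hu z hz)).symm
    have hH0 : H (f z) = 0 := by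
      obtain ⟨zw, hzw, hw⟩ := hex
      have hzzw : z ≠ zw := by
        intro h
        exact hw (h ▸ hflat z ⟨by linarith, by linarith⟩)
      rcases lt_or_gt_of_ne hzzw with h | h
      · exact flat_right hf hu hu'c hHc hkey hz hzw h hw hηpos hsub hflat
      · -- reflect
        have hneg : ∀ s ∈ Ioo (-b) (-a), -s ∈ Ioo a b := fun s hs =>
          ⟨by linarith [hs.2], by linarith [hs.1]⟩
        have hfR : ∀ s ∈ Ioo (-b) (-a), HasDerivAt (fun t => f (-t)) (-(u (-s))) s := by
          intro s hs
          simpa [Function.comp_def] using (hf (-s) (hneg s hs)).comp s (hasDerivAt_neg s)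
        have huR : ∀ s ∈ Ioo (-b) (-a), HasDerivAt (fun t => -(u (-t))) (u' (-s)) s := by
          intro s hs
          have := ((hu (-s) (hneg s hs)).comp s (hasDerivAt_neg s)).neg
          simpa [Function.comp_def, Pi.neg_def] using this
        have hu'cR : ∀ s ∈ Ioo (-b) (-a), ContinuousAt (fun t => u' (-t)) s := fun s hs =>
          (hu'c (-s) (hneg s hs)).comp (continuous_neg.continuousAt)
        have hHcR : ∀ s ∈ Ioo (-b) (-a), ContinuousAt H ((fun t => f (-t)) s) := fun s hs =>
          hHc (-s) (hneg s hs)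
        have hkeyR : ∀ s ∈ Ioo (-b) (-a),
            (-(u (-s))) * (2 * (u' (-s)) - H (f (-s))) = 0 := by
          intro s hs
          have := hkey (-s) (hneg s hs)
          ring_nf
          ring_nf at this
          linarith [this]
        have hzR : -z ∈ Ioo (-b) (-a) := ⟨by linarith [hz.2], by linarith [hz.1]⟩
        have hzwR : -zw ∈ Ioo (-b) (-a) := ⟨by linarith [hzw.2], by linarith [hzw.1]⟩
        have hsubR : Ioo (-z - η) (-z + η) ⊆ Ioo (-b) (-a) := by
          intro s hs
          have := hsub (a := -s) ⟨by linarith [hs.2], by linarith [hs.1]⟩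
          exact ⟨by linarith [this.2], by linarith [this.1]⟩
        have hflatR : ∀ s ∈ Ioo (-z - η) (-z + η), -(u (-s)) = 0 := by
          intro s hs
          have := hflat (-s) ⟨by linarith [hs.2], by linarith [hs.1]⟩
          simpa using this
        have := flat_right (u := fun t => -(u (-t))) (u' := fun t => u' (-t)) (H := H)
          hfR huR hu'cR hHcR hkeyR hzR hzwR (by linarith) (by simpa using hw)
          hηpos hsubR hflatR
        simpa using this
    rw [hu'z, hH0]
    ring


section Calc

/-- derivative of `fun v => G v w` where `G` is CLM-valued. -/
lemma hasFDerivAt_clm_apply {E : Type*} [NormedAddCommGroup E] [NormedSpace ℝ E]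
    {G : E → (E →L[ℝ] ℝ)} {x : E} (hG : DifferentiableAt ℝ G x) (w : E) :
    HasFDerivAt (fun v => G v w) ((ContinuousLinearMap.apply ℝ ℝ w).comp (fderiv ℝ G x)) x :=
  ((ContinuousLinearMap.apply ℝ ℝ w).hasFDerivAt).comp x hG.hasFDerivAt

variable {f : ℝ → ℝ → ℝ} {s : Set (ℝ × ℝ)}

lemma slice2_hasDerivAt (hs : IsOpen s)
    (hf : ContDiffOn ℝ (⊤ : ℕ∞) (fun v : ℝ × ℝ => f v.1 v.2) s) {p z : ℝ} (hx : (p, z) ∈ s) :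
    HasDerivAt (fun t => f p t) (fderiv ℝ (fun v : ℝ × ℝ => f v.1 v.2) (p, z) (0, 1)) z := by
  have hd : DifferentiableAt ℝ (fun v : ℝ × ℝ => f v.1 v.2) (p, z) :=
    (hf.differentiableOn (by simp)).differentiableAt (hs.mem_nhds hx)
  have h1 : HasDerivAt (fun t : ℝ => ((p : ℝ), t)) ((0 : ℝ), (1 : ℝ)) z :=
    (hasDerivAt_const z p).prodMk (hasDerivAt_id z)
  exact hd.hasFDerivAt.comp_hasDerivAt z h1

lemma slice1_hasDerivAt (hs : IsOpen s)
    (hf : ContDiffOn ℝ (⊤ : ℕ∞) (fun v : ℝ × ℝ => f v.1 v.2) s) {p z : ℝ} (hx : (p, z) ∈ s) :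
    HasDerivAt (fun t => f t z) (fderiv ℝ (fun v : ℝ × ℝ => f v.1 v.2) (p, z) (1, 0)) p := by
  have hd : DifferentiableAt ℝ (fun v : ℝ × ℝ => f v.1 v.2) (p, z) :=
    (hf.differentiableOn (by simp)).differentiableAt (hs.mem_nhds hx)
  have h1 : HasDerivAt (fun t : ℝ => (t, (z : ℝ))) ((1 : ℝ), (0 : ℝ)) p :=
    (hasDerivAt_id p).prodMk (hasDerivAt_const p z)
  exact hd.hasFDerivAt.comp_hasDerivAt p h1

lemma pdz_eq_fderiv (hs : IsOpen s)
    (hf : ContDiffOn ℝ (⊤ : ℕ∞) (fun v : ℝ × ℝ => f v.1 v.2) s) {p z : ℝ} (hx : (p, z) ∈ s) :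
    pdz f p z = fderiv ℝ (fun v : ℝ × ℝ => f v.1 v.2) (p, z) (0, 1) :=
  (slice2_hasDerivAt hs hf hx).deriv

lemma pdp_eq_fderiv (hs : IsOpen s)
    (hf : ContDiffOn ℝ (⊤ : ℕ∞) (fun v : ℝ × ℝ => f v.1 v.2) s) {p z : ℝ} (hx : (p, z) ∈ s) :
    pdp f p z = fderiv ℝ (fun v : ℝ × ℝ => f v.1 v.2) (p, z) (1, 0) :=
  (slice1_hasDerivAt hs hf hx).deriv

/-- Smoothness of the directional derivative `v ↦ fderiv F v w`. -/
lemma contDiffOn_fderiv_apply (hs : IsOpen s)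
    (hf : ContDiffOn ℝ (⊤ : ℕ∞) (fun v : ℝ × ℝ => f v.1 v.2) s) (w : ℝ × ℝ) :
    ContDiffOn ℝ (⊤ : ℕ∞) (fun v => fderiv ℝ (fun v : ℝ × ℝ => f v.1 v.2) v w) s := by
  have h1 : ContDiffOn ℝ (⊤ : ℕ∞) (fderiv ℝ (fun v : ℝ × ℝ => f v.1 v.2)) s :=
    hf.fderiv_of_isOpen hs (by exact_mod_cast le_top)
  exact (ContinuousLinearMap.apply ℝ ℝ w).contDiff.comp_contDiffOn h1

end Calc

section Calc2
variable {f : ℝ → ℝ → ℝ} {s : Set (ℝ × ℝ)}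

lemma slice_mem_nhds (hs : IsOpen s) {p z : ℝ} (hx : (p, z) ∈ s) :
    {t : ℝ | (p, t) ∈ s} ∈ 𝓝 z :=
  (hs.preimage (continuous_const.prodMk continuous_id)).mem_nhds hx

lemma slice1_mem_nhds (hs : IsOpen s) {p z : ℝ} (hx : (p, z) ∈ s) :
    {t : ℝ | (t, z) ∈ s} ∈ 𝓝 p :=
  (hs.preimage (continuous_id.prodMk continuous_const)).mem_nhds hx

lemma pdzz_eq_fderiv (hs : IsOpen s)
    (hf : ContDiffOn ℝ (⊤ : ℕ∞) (fun v : ℝ × ℝ => f v.1 v.2) s) {p z : ℝ} (hx : (p, z) ∈ s) :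
    pdzz f p z =
      fderiv ℝ (fun v => fderiv ℝ (fun v : ℝ × ℝ => f v.1 v.2) v (0, 1)) (p, z) (0, 1) := by
  have hU : ContDiffOn ℝ (⊤ : ℕ∞)
      (fun v => fderiv ℝ (fun v : ℝ × ℝ => f v.1 v.2) v (0, 1)) s :=
    contDiffOn_fderiv_apply hs hf (0, 1)
  have hev : (fun t => pdz f p t) =ᶠ[𝓝 z]
      (fun t => fderiv ℝ (fun v : ℝ × ℝ => f v.1 v.2) (p, t) (0, 1)) := by
    filter_upwards [slice_mem_nhds hs hx] with t ht
    exact pdz_eq_fderiv hs hf ht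
  have h2 := slice2_hasDerivAt (f := fun a b => fderiv ℝ (fun v : ℝ × ℝ => f v.1 v.2) (a, b) (0, 1))
      hs hU hx
  rw [pdzz, hev.deriv_eq, h2.deriv]

lemma schwarz (hs : IsOpen s)
    (hf : ContDiffOn ℝ (⊤ : ℕ∞) (fun v : ℝ × ℝ => f v.1 v.2) s) {x : ℝ × ℝ} (hx : x ∈ s) :
    fderiv ℝ (fun v => fderiv ℝ (fun v : ℝ × ℝ => f v.1 v.2) v (1, 0)) x (0, 1) =
    fderiv ℝ (fun v => fderiv ℝ (fun v : ℝ × ℝ => f v.1 v.2) v (0, 1)) x (1, 0) := by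
  set F : ℝ × ℝ → ℝ := fun v => f v.1 v.2 with hF
  have hF₁ : ContDiffOn ℝ (⊤ : ℕ∞) (fderiv ℝ F) s :=
    hf.fderiv_of_isOpen hs (by exact_mod_cast le_top)
  have hd : DifferentiableAt ℝ (fderiv ℝ F) x :=
    (hF₁.differentiableOn (by simp)).differentiableAt (hs.mem_nhds hx)
  have h1 : fderiv ℝ (fun v => fderiv ℝ F v (1, 0)) x (0, 1)
      = fderiv ℝ (fderiv ℝ F) x (0, 1) (1, 0) := by
    rw [(hasFDerivAt_clm_apply hd ((1 : ℝ), (0 : ℝ))).fderiv]; rfl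
  have h2 : fderiv ℝ (fun v => fderiv ℝ F v (0, 1)) x (1, 0)
      = fderiv ℝ (fderiv ℝ F) x (1, 0) (0, 1) := by
    rw [(hasFDerivAt_clm_apply hd ((0 : ℝ), (1 : ℝ))).fderiv]; rfl
  have hsymm : IsSymmSndFDerivAt ℝ F x := by
    apply ContDiffAt.isSymmSndFDerivAt (n := ((⊤ : ℕ∞) : WithTop ℕ∞))
    · exact hf.contDiffAt (hs.mem_nhds hx)
    · have : ((2:ℕ∞) : WithTop ℕ∞) ≤ ((⊤:ℕ∞) : WithTop ℕ∞) := by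
        rw [WithTop.coe_le_coe]; exact le_top
      simpa using this
  rw [h1, h2, hsymm (0, 1) (1, 0)]

end Calc2

end AuxLemmas

section AuxF
open Set Filter Topology

variable {F : ℝ × ℝ → ℝ} {s : Set (ℝ × ℝ)}

lemma sliceF2 (hs : IsOpen s) (hF : ContDiffOn ℝ (⊤ : ℕ∞) F s) {p z : ℝ} (hx : (p, z) ∈ s) :
    HasDerivAt (fun t => F (p, t)) (fderiv ℝ F (p, z) (0, 1)) z := by
  have hd : DifferentiableAt ℝ F (p, z) :=
    (hF.differentiableOn (by simp)).differentiableAt (hs.mem_nhds hx)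
  exact hd.hasFDerivAt.comp_hasDerivAt z ((hasDerivAt_const z p).prodMk (hasDerivAt_id z))

lemma sliceF1 (hs : IsOpen s) (hF : ContDiffOn ℝ (⊤ : ℕ∞) F s) {p z : ℝ} (hx : (p, z) ∈ s) :
    HasDerivAt (fun t => F (t, z)) (fderiv ℝ F (p, z) (1, 0)) p := by
  have hd : DifferentiableAt ℝ F (p, z) :=
    (hF.differentiableOn (by simp)).differentiableAt (hs.mem_nhds hx)
  exact hd.hasFDerivAt.comp_hasDerivAt p ((hasDerivAt_id p).prodMk (hasDerivAt_const p z))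

lemma contDiffOn_fderivF_apply (hs : IsOpen s) (hF : ContDiffOn ℝ (⊤ : ℕ∞) F s) (w : ℝ × ℝ) :
    ContDiffOn ℝ (⊤ : ℕ∞) (fun v => fderiv ℝ F v w) s :=
  (ContinuousLinearMap.apply ℝ ℝ w).contDiff.comp_contDiffOn
    (hF.fderiv_of_isOpen hs (by exact_mod_cast le_top))

lemma contF_at (hs : IsOpen s) (hF : ContDiffOn ℝ (⊤ : ℕ∞) F s) {x : ℝ × ℝ} (hx : x ∈ s) :
    ContinuousAt F x :=
  (hF.continuousOn.continuousAt (hs.mem_nhds hx))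

lemma slice1_contAt (hs : IsOpen s) (hF : ContDiffOn ℝ (⊤ : ℕ∞) F s) {p z : ℝ}
    (hx : (p, z) ∈ s) : ContinuousAt (fun t => F (t, z)) p := by
  have h : ContinuousAt (fun t : ℝ => (t, z)) p :=
    (continuous_id.prodMk continuous_const).continuousAt
  exact ContinuousAt.comp (f := fun t : ℝ => (t, z)) (contF_at hs hF hx) h

lemma slice2_contAt (hs : IsOpen s) (hF : ContDiffOn ℝ (⊤ : ℕ∞) F s) {p z : ℝ}
    (hx : (p, z) ∈ s) : ContinuousAt (fun t => F (p, t)) z := by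
  have h : ContinuousAt (fun t : ℝ => ((p : ℝ), t)) z :=
    (continuous_const.prodMk continuous_id).continuousAt
  exact ContinuousAt.comp (f := fun t : ℝ => ((p : ℝ), t)) (contF_at hs hF hx) h

end AuxF

open Set Filter Topology in
/-- Lemma 9.1: let `f` solve, on `(p₁,p₂)×(z₁,z₂)`, the system
`(f²−β)f'_p² − α(1+f'_z²) = 0`, `f²(εf²+γ)²(1+f'_z²) − 4α(f²−β) = 0` with `f > √β`
(`ε = ±1` the sign of the nonvanishing `f'_p`).  If `f'_z(p₀,z₀) = 0` and
`f''_{zz}(p₀,z₀) ≠ 0` at some point of the rectangle, then near `p₀` the solution is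
symmetric with respect to `z₀` (`f(p,z) = f(p,2z₀−z)`, in particular `f'_z(p,z₀) = 0`),
and `f` extends to a solution on `(p₀−δ,p₀+δ)×(z₀−Δ,z₀+Δ)` with
`(z₁,z₂) ⊆ (z₀−Δ,z₀+Δ)`. -/
theorem reflection_symmetry (p₁ p₂ z₁ z₂ : ℝ)
    (α β γ : ℝ → ℝ)
    (hα : ContDiffOn ℝ 1 α (Set.Ioo p₁ p₂)) (hβ : ContDiffOn ℝ 1 β (Set.Ioo p₁ p₂))
    (hγ : ContDiffOn ℝ 1 γ (Set.Ioo p₁ p₂))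
    (hαpos : ∀ p ∈ Set.Ioo p₁ p₂, 0 < α p) (hβnn : ∀ p ∈ Set.Ioo p₁ p₂, 0 ≤ β p)
    (ε : ℝ) (hε : ε = 1 ∨ ε = -1)
    (f : ℝ → ℝ → ℝ)
    (hf : ContDiffOn ℝ (⊤ : ℕ∞) (fun v : ℝ × ℝ => f v.1 v.2)
      (Set.Ioo p₁ p₂ ×ˢ Set.Ioo z₁ z₂))
    (hfβ : ∀ p ∈ Set.Ioo p₁ p₂, ∀ z ∈ Set.Ioo z₁ z₂, Real.sqrt (β p) < f p z)
    (heq1 : ∀ p ∈ Set.Ioo p₁ p₂, ∀ z ∈ Set.Ioo z₁ z₂,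
      ((f p z) ^ 2 - β p) * (pdp f p z) ^ 2 - α p * (1 + (pdz f p z) ^ 2) = 0)
    (heq2 : ∀ p ∈ Set.Ioo p₁ p₂, ∀ z ∈ Set.Ioo z₁ z₂,
      (f p z) ^ 2 * (ε * (f p z) ^ 2 + γ p) ^ 2 * (1 + (pdz f p z) ^ 2)
        - 4 * α p * ((f p z) ^ 2 - β p) = 0)
    (hsign : ∀ p ∈ Set.Ioo p₁ p₂, ∀ z ∈ Set.Ioo z₁ z₂, 0 < ε * pdp f p z)
    (p₀ z₀ : ℝ) (hp₀ : p₀ ∈ Set.Ioo p₁ p₂) (hz₀ : z₀ ∈ Set.Ioo z₁ z₂)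
    (hcrit : pdz f p₀ z₀ = 0) (hnondeg : pdzz f p₀ z₀ ≠ 0) :
    ∃ δ : ℝ, 0 < δ ∧ Set.Ioo (p₀ - δ) (p₀ + δ) ⊆ Set.Ioo p₁ p₂ ∧
      -- reflection symmetry about z₀
      (∀ p ∈ Set.Ioo (p₀ - δ) (p₀ + δ), ∀ z ∈ Set.Ioo z₁ z₂,
        2 * z₀ - z ∈ Set.Ioo z₁ z₂ → f p z = f p (2 * z₀ - z)) ∧
      (∀ p ∈ Set.Ioo (p₀ - δ) (p₀ + δ), pdz f p z₀ = 0) ∧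
      -- extension of the solution to a z-symmetric rectangle containing (z₁, z₂)
      ∃ Δ : ℝ, 0 < Δ ∧ Set.Ioo z₁ z₂ ⊆ Set.Ioo (z₀ - Δ) (z₀ + Δ) ∧
        ∃ g : ℝ → ℝ → ℝ,
          ContDiffOn ℝ (⊤ : ℕ∞) (fun v : ℝ × ℝ => g v.1 v.2)
            (Set.Ioo (p₀ - δ) (p₀ + δ) ×ˢ Set.Ioo (z₀ - Δ) (z₀ + Δ)) ∧
          (∀ p ∈ Set.Ioo (p₀ - δ) (p₀ + δ), ∀ z ∈ Set.Ioo z₁ z₂, g p z = f p z) ∧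
          (∀ p ∈ Set.Ioo (p₀ - δ) (p₀ + δ), ∀ z ∈ Set.Ioo (z₀ - Δ) (z₀ + Δ),
            Real.sqrt (β p) < g p z ∧
            ((g p z) ^ 2 - β p) * (pdp g p z) ^ 2 - α p * (1 + (pdz g p z) ^ 2) = 0 ∧
            (g p z) ^ 2 * (ε * (g p z) ^ 2 + γ p) ^ 2 * (1 + (pdz g p z) ^ 2)
              - 4 * α p * ((g p z) ^ 2 - β p) = 0) := by
  classical
  set D : Set (ℝ × ℝ) := Set.Ioo p₁ p₂ ×ˢ Set.Ioo z₁ z₂ with hDdef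
  have hDopen : IsOpen D := isOpen_Ioo.prod isOpen_Ioo
  set F : ℝ × ℝ → ℝ := fun v => f v.1 v.2 with hFdef
  have hF : ContDiffOn ℝ (⊤ : ℕ∞) F D := hf
  set U : ℝ × ℝ → ℝ := fun v => fderiv ℝ F v (0, 1) with hUdef
  set P : ℝ × ℝ → ℝ := fun v => fderiv ℝ F v (1, 0) with hPdef
  set Q : ℝ × ℝ → ℝ := fun v => fderiv ℝ U v (0, 1) with hQdef
  set N : ℝ × ℝ → ℝ := fun v => fderiv ℝ U v (1, 0) with hNdef
  have hUc : ContDiffOn ℝ (⊤ : ℕ∞) U D := contDiffOn_fderivF_apply hDopen hF _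
  have hPc : ContDiffOn ℝ (⊤ : ℕ∞) P D := contDiffOn_fderivF_apply hDopen hF _
  have hQc : ContDiffOn ℝ (⊤ : ℕ∞) Q D := contDiffOn_fderivF_apply hDopen hUc _
  have hmem : ∀ {p z : ℝ}, p ∈ Set.Ioo p₁ p₂ → z ∈ Set.Ioo z₁ z₂ → (p, z) ∈ D :=
    fun hp hz => Set.mk_mem_prod hp hz
  have hpdzU : ∀ {p z : ℝ}, (p, z) ∈ D → pdz f p z = U (p, z) :=
    fun h => pdz_eq_fderiv hDopen hf h
  have hpdpP : ∀ {p z : ℝ}, (p, z) ∈ D → pdp f p z = P (p, z) :=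
    fun h => pdp_eq_fderiv hDopen hf h
  have hpdzzQ : ∀ {p z : ℝ}, (p, z) ∈ D → pdzz f p z = Q (p, z) :=
    fun h => pdzz_eq_fderiv hDopen hf h
  -- positivity facts
  have hfpos : ∀ {p z : ℝ}, (p, z) ∈ D → 0 < f p z := by
    intro p z h
    have h1 := hfβ p h.1 z h.2
    have := Real.sqrt_nonneg (β p)
    linarith
  have hfsq : ∀ {p z : ℝ}, (p, z) ∈ D → β p < (f p z) ^ 2 := by
    intro p z h
    have h1 := hfβ p h.1 z h.2
    have h2 : Real.sqrt (β p) ^ 2 < (f p z) ^ 2 :=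
      pow_lt_pow_left₀ h1 (Real.sqrt_nonneg _) (by norm_num)
    rwa [Real.sq_sqrt (hβnn p h.1)] at h2
  have hεne : ε ≠ 0 := by rcases hε with h | h <;> rw [h] <;> norm_num
  have hP0 : ∀ {p z : ℝ}, (p, z) ∈ D → P (p, z) ≠ 0 := by
    intro p z h hc
    have := hsign p h.1 z h.2
    rw [hpdpP h, hc, mul_zero] at this
    exact lt_irrefl 0 this
  have hE2 : ∀ {p z : ℝ}, (p, z) ∈ D →
      (f p z) ^ 2 * (ε * (f p z) ^ 2 + γ p) ^ 2 * (1 + (U (p, z)) ^ 2)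
        - 4 * α p * ((f p z) ^ 2 - β p) = 0 := by
    intro p z h
    have := heq2 p h.1 z h.2
    rwa [hpdzU h] at this
  have hBpos : ∀ {p z : ℝ}, (p, z) ∈ D →
      0 < (f p z) ^ 2 * (ε * (f p z) ^ 2 + γ p) ^ 2 := by
    intro p z h
    have h1 := hE2 h
    have h2 := hfsq h
    have h3 := hαpos p h.1
    nlinarith [sq_nonneg (U (p, z)), sq_nonneg (f p z * (ε * (f p z) ^ 2 + γ p))]
  have hker : ∀ {p z : ℝ}, (p, z) ∈ D → ε * (f p z) ^ 2 + γ p ≠ 0 := by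
    intro p z h hc
    have := hBpos h
    rw [hc] at this
    simp at this
  -- the conserved quantity
  set Φ : ℝ → ℝ → ℝ := fun p y => 4 * α p * (y ^ 2 - β p) / (y ^ 2 * (ε * y ^ 2 + γ p) ^ 2) - 1
    with hΦdef
  set Φy : ℝ → ℝ → ℝ := fun p y => deriv (Φ p) y with hΦydef
  have hΦsm : ∀ (p : ℝ) (y : ℝ), y ≠ 0 → ε * y ^ 2 + γ p ≠ 0 →
      ContDiffAt ℝ (⊤ : ℕ∞) (Φ p) y := by
    intro p y h0 hk
    rw [hΦdef]
    apply ContDiffAt.sub _ contDiffAt_const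
    apply ContDiffAt.div
    · exact (contDiff_const.mul ((contDiff_id.pow 2).sub contDiff_const)).contDiffAt
    · exact ((contDiff_id.pow 2).mul
        (((contDiff_const.mul (contDiff_id.pow 2)).add contDiff_const).pow 2)).contDiffAt
    · exact mul_ne_zero (pow_ne_zero _ h0) (pow_ne_zero _ hk)
  have hΦy : ∀ (p : ℝ) (y : ℝ), y ≠ 0 → ε * y ^ 2 + γ p ≠ 0 →
      HasDerivAt (Φ p) (Φy p y) y ∧ ContDiffAt ℝ 1 (Φy p) y := by
    intro p y h0 hk
    have hsm := hΦsm p y h0 hk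
    constructor
    · have hd : DifferentiableAt ℝ (Φ p) y :=
        hsm.differentiableAt (by simp)
      rw [hΦydef]
      exact hd.hasDerivAt
    · obtain ⟨u, hu, hcd⟩ := hsm.contDiffOn (m := 2)
        (by
          have : ((2:ℕ∞) : WithTop ℕ∞) ≤ ((⊤:ℕ∞) : WithTop ℕ∞) := by
            rw [WithTop.coe_le_coe]; exact le_top
          simpa using this) (by simp)
      obtain ⟨u', hu'sub, hu'open, hyu'⟩ := mem_nhds_iff.1 hu
      have hder : ContDiffOn ℝ 1 (deriv (Φ p)) u' :=
        (hcd.mono hu'sub).deriv_of_isOpen hu'open (by norm_num)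
      have : ContDiffAt ℝ 1 (deriv (Φ p)) y :=
        hder.contDiffAt (hu'open.mem_nhds hyu')
      rw [hΦydef]
      exact this
  have hgood : ∀ {p z : ℝ}, (p, z) ∈ D → f p z ≠ 0 :=
    fun h => ne_of_gt (hfpos h)
  have hΦeq : ∀ {p z : ℝ}, (p, z) ∈ D → (U (p, z)) ^ 2 = Φ p (f p z) := by
    intro p z h
    have hB := hBpos h
    have hE := hE2 h
    rw [hΦdef]
    simp only []
    rw [eq_sub_iff_add_eq, eq_div_iff (ne_of_gt hB)]
    linear_combination hE
  have hUz : ∀ {p z : ℝ}, (p, z) ∈ D → HasDerivAt (fun t => U (p, t)) (Q (p, z)) z :=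
    fun h => sliceF2 hDopen hUc h
  have hfz : ∀ {p z : ℝ}, (p, z) ∈ D → HasDerivAt (fun t => f p t) (U (p, z)) z :=
    fun h => sliceF2 hDopen hF h
  have hkey : ∀ {p z : ℝ}, (p, z) ∈ D →
      U (p, z) * (2 * Q (p, z) - Φy p (f p z)) = 0 := by
    intro p z h
    obtain ⟨hΦd, -⟩ := hΦy p (f p z) (hgood h) (hker h)
    have h1 : HasDerivAt (fun t => (U (p, t)) ^ 2)
        ((2 : ℕ) * (U (p, z)) ^ 1 * Q (p, z)) z := (hUz h).pow 2
    have h2 : HasDerivAt (fun t => Φ p (f p t)) (Φy p (f p z) * U (p, z)) z :=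
      hΦd.comp z (hfz h)
    have hev : (fun t => (U (p, t)) ^ 2) =ᶠ[𝓝 z] (fun t => Φ p (f p t)) := by
      filter_upwards [slice_mem_nhds hDopen h] with t ht
      exact hΦeq ht
    have h2' := h2.congr_of_eventuallyEq hev
    have := h1.unique h2'
    push_cast at this
    linear_combination this
  -- choice of δ
  have hQcontz : ContinuousAt (fun p => Q (p, z₀)) p₀ := slice1_contAt hDopen hQc (hmem hp₀ hz₀)
  obtain ⟨δ, hδpos, hδsub, hQδ⟩ :
      ∃ δ : ℝ, 0 < δ ∧ Set.Ioo (p₀ - δ) (p₀ + δ) ⊆ Set.Ioo p₁ p₂ ∧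
        ∀ p ∈ Set.Ioo (p₀ - δ) (p₀ + δ), Q (p, z₀) ≠ 0 := by
    have hQ0 : Q (p₀, z₀) ≠ 0 := by
      rw [← hpdzzQ (hmem hp₀ hz₀)]
      exact hnondeg
    have hev1 : ∀ᶠ q in 𝓝 p₀, Q (q, z₀) ≠ 0 :=
      hQcontz.preimage_mem_nhds (isOpen_ne.mem_nhds hQ0)
    have hev2 : ∀ᶠ q in 𝓝 p₀, q ∈ Set.Ioo p₁ p₂ :=
      isOpen_Ioo.mem_nhds hp₀
    obtain ⟨δ, hδ, hball⟩ := Metric.eventually_nhds_iff.1 (hev1.and hev2)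
    refine ⟨δ, hδ, fun q hq => (hball (y := q) ?_).2, fun q hq => (hball (y := q) ?_).1⟩ <;>
      · rw [Real.dist_eq, abs_sub_lt_iff]
        constructor <;> [linarith [hq.2]; linarith [hq.1]]
  -- the z-derivative vanishes on the segment z = z₀
  have hw0 : ∀ p ∈ Set.Ioo p₁ p₂, U (p, z₀) = 0 := by
    -- differentiate eq1 in z and use Schwarz symmetry
    have hDer1 : ∀ {p z : ℝ}, (p, z) ∈ D →
        2 * f p z * U (p, z) * P (p, z) ^ 2
          + ((f p z) ^ 2 - β p) * (2 * P (p, z) * N (p, z))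
          - α p * (2 * U (p, z) * Q (p, z)) = 0 := by
      intro p z h
      have hM : HasDerivAt (fun t => P (p, t)) (fderiv ℝ P (p, z) (0, 1)) z :=
        sliceF2 hDopen hPc h
      have hsch : fderiv ℝ P (p, z) (0, 1) = N (p, z) := schwarz hDopen hf h
      have hc1 := ((((hfz h).pow 2).sub_const (β p)).mul (hM.pow 2)).sub
        ((((hUz h).pow 2).const_add 1).const_mul (α p))
      have hzero : HasDerivAt
          (fun t => ((f p t) ^ 2 - β p) * (P (p, t)) ^ 2 - α p * (1 + (U (p, t)) ^ 2))
          0 z := by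
        apply (hasDerivAt_const z (0 : ℝ)).congr_of_eventuallyEq
        filter_upwards [slice_mem_nhds hDopen h] with t ht
        have := heq1 p ht.1 t ht.2
        rw [hpdpP ht, hpdzU ht] at this
        exact this
      have h0 := hc1.unique hzero
      rw [hsch] at h0
      push_cast at h0
      simp only [Pi.pow_apply] at h0
      linear_combination h0
    set Kf : ℝ → ℝ := fun p => (α p * Q (p, z₀) - f p z₀ * P (p, z₀) ^ 2) /
      (((f p z₀) ^ 2 - β p) * P (p, z₀)) with hKfdef
    have hode : ∀ p ∈ Set.Ioo p₁ p₂, HasDerivAt (fun q => U (q, z₀)) (Kf p * U (p, z₀)) p := by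
      intro p hp
      have hD' : (p, z₀) ∈ D := hmem hp hz₀
      have h1 : HasDerivAt (fun t => U (t, z₀)) (N (p, z₀)) p := sliceF1 hDopen hUc hD'
      have hden : ((f p z₀) ^ 2 - β p) * P (p, z₀) ≠ 0 :=
        mul_ne_zero (ne_of_gt (sub_pos.2 (hfsq hD'))) (hP0 hD')
      have heqN : Kf p * U (p, z₀) = N (p, z₀) := by
        rw [hKfdef]
        simp only []
        rw [div_mul_eq_mul_div, div_eq_iff hden]
        linear_combination (-(1 : ℝ) / 2) * hDer1 hD'
      rw [heqN]
      exact h1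
    have hKcont : ∀ p ∈ Set.Ioo p₁ p₂, ContinuousAt Kf p := by
      intro p hp
      have hD' : (p, z₀) ∈ D := hmem hp hz₀
      have hden : ((f p z₀) ^ 2 - β p) * P (p, z₀) ≠ 0 :=
        mul_ne_zero (ne_of_gt (sub_pos.2 (hfsq hD'))) (hP0 hD')
      have hcf : ContinuousAt (fun q => f q z₀) p := slice1_contAt hDopen hF hD'
      have hcP : ContinuousAt (fun q => P (q, z₀)) p := slice1_contAt hDopen hPc hD'
      have hcQ : ContinuousAt (fun q => Q (q, z₀)) p := slice1_contAt hDopen hQc hD'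
      have hcα : ContinuousAt α p := hα.continuousOn.continuousAt (isOpen_Ioo.mem_nhds hp)
      have hcβ : ContinuousAt β p := hβ.continuousOn.continuousAt (isOpen_Ioo.mem_nhds hp)
      rw [hKfdef]
      exact ((hcα.mul hcQ).sub (hcf.mul (hcP.pow 2))).div
        (((hcf.pow 2).sub hcβ).mul hcP) hden
    have h0 : U (p₀, z₀) = 0 := by
      rw [← hpdzU (hmem hp₀ hz₀)]
      exact hcrit
    exact linear_ode_zero hp₀ hKcont hode h0
  -- the second-order ODE holds on good slices
  have hRel : ∀ p ∈ Set.Ioo (p₀ - δ) (p₀ + δ), ∀ z ∈ Set.Ioo z₁ z₂,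
      2 * Q (p, z) = Φy p (f p z) := by
    intro p hp z hz
    have hpP : p ∈ Set.Ioo p₁ p₂ := hδsub hp
    apply flat_rel (f := fun t => f p t) (u := fun t => U (p, t)) (u' := fun t => Q (p, t))
      (H := Φy p) (a := z₁) (b := z₂)
      (fun t ht => hfz (hmem hpP ht)) (fun t ht => hUz (hmem hpP ht))
      (fun t ht => slice2_contAt hDopen hQc (hmem hpP ht))
      (fun t ht => (hΦy p (f p t) (hgood (hmem hpP ht)) (hker (hmem hpP ht))).2.continuousAt)
      (fun t ht => hkey (hmem hpP ht)) _ z hz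
    by_contra hall
    push_neg at hall
    have hz0 : HasDerivAt (fun t => U (p, t)) 0 z₀ := by
      apply (hasDerivAt_const z₀ (0 : ℝ)).congr_of_eventuallyEq
      filter_upwards [isOpen_Ioo.mem_nhds hz₀] with t ht
      exact hall t ht
    exact hQδ p hp ((hUz (hmem hpP hz₀)).unique hz0)
  -- reflection symmetry
  have hsym : ∀ p ∈ Set.Ioo (p₀ - δ) (p₀ + δ), ∀ z ∈ Set.Ioo z₁ z₂,
      2 * z₀ - z ∈ Set.Ioo z₁ z₂ → f p z = f p (2 * z₀ - z) := by
    intro p hp z hz hz'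
    have hpP : p ∈ Set.Ioo p₁ p₂ := hδsub hp
    set aJ : ℝ := max z₁ (2 * z₀ - z₂) with haJ
    set bJ : ℝ := min z₂ (2 * z₀ - z₁) with hbJ
    have hJsub : Set.Ioo aJ bJ ⊆ Set.Ioo z₁ z₂ := fun t ht =>
      ⟨(le_max_left _ _).trans_lt ht.1, ht.2.trans_le (min_le_left _ _)⟩
    have hJrefl : ∀ t ∈ Set.Ioo aJ bJ, 2 * z₀ - t ∈ Set.Ioo z₁ z₂ := by
      intro t ht
      have h1 : 2 * z₀ - z₂ ≤ aJ := le_max_right _ _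
      have h2 : bJ ≤ 2 * z₀ - z₁ := min_le_right _ _
      exact ⟨by linarith [ht.2], by linarith [ht.1]⟩
    set γA : ℝ → ℝ × ℝ := fun t => (f p t, U (p, t)) with hγA
    set γB : ℝ → ℝ × ℝ := fun t => (f p (2 * z₀ - t), -U (p, 2 * z₀ - t)) with hγB
    set v : ℝ × ℝ → ℝ × ℝ := fun y => (y.2, Φy p y.1 / 2) with hv
    have hz₀J : z₀ ∈ Set.Ioo aJ bJ := by
      rw [haJ, hbJ]
      constructor
      · rw [max_lt_iff]; exact ⟨hz₀.1, by linarith [hz₀.2]⟩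
      · rw [lt_min_iff]; exact ⟨hz₀.2, by linarith [hz₀.1]⟩
    have hvC : ∀ t ∈ Set.Ioo aJ bJ, ContDiffAt ℝ 1 v (γA t) := by
      intro t ht
      have htz := hJsub ht
      have hD' := hmem hpP htz
      have hΦy1 : ContDiffAt ℝ 1 (Φy p) ((γA t).1) :=
        (hΦy p (f p t) (hgood hD') (hker hD')).2
      rw [hv]
      exact contDiffAt_snd.prodMk ((hΦy1.comp (γA t) contDiffAt_fst).div_const 2)
    have h₁ : ∀ t ∈ Set.Ioo aJ bJ, HasDerivAt γA (v (γA t)) t := by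
      intro t ht
      have htz := hJsub ht
      have hD' := hmem hpP htz
      have hder := (hfz hD').prodMk (hUz hD')
      have hQe : Q (p, t) = Φy p (f p t) / 2 := by
        have := hRel p hp t htz
        linarith
      have hveq : v (γA t) = (U (p, t), Q (p, t)) := by
        rw [hv, hγA]
        simp only []
        rw [hQe]
      rw [hveq]
      exact hder
    have h₂ : ∀ t ∈ Set.Ioo aJ bJ, HasDerivAt γB (v (γB t)) t := by
      intro t ht
      have htz := hJrefl t ht
      have hD' := hmem hpP htz
      have hre : HasDerivAt (fun s : ℝ => 2 * z₀ - s) (-1) t := by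
        simpa using (hasDerivAt_id t).const_sub (2 * z₀)
      have hcomp1 : HasDerivAt (fun s => f p (2 * z₀ - s)) (U (p, 2 * z₀ - t) * (-1)) t :=
        (hfz hD').comp t hre
      have hcomp2 : HasDerivAt (fun s => -U (p, 2 * z₀ - s)) (-(Q (p, 2 * z₀ - t) * (-1))) t :=
        ((hUz hD').comp t hre).neg
      have hder := hcomp1.prodMk hcomp2
      have hQe : Q (p, 2 * z₀ - t) = Φy p (f p (2 * z₀ - t)) / 2 := by
        have := hRel p hp (2 * z₀ - t) htz
        linarith
      have hveq : v (γB t) = (U (p, 2 * z₀ - t) * (-1), -(Q (p, 2 * z₀ - t) * (-1))) := by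
        rw [hv, hγB]
        simp only [Prod.mk.injEq]
        refine ⟨by ring, by rw [hQe]; ring⟩
      rw [hveq]
      exact hder
    have heq₀ : γA z₀ = γB z₀ := by
      rw [hγA, hγB]
      simp only []
      rw [show 2 * z₀ - z₀ = z₀ by ring, hw0 p hpP]
      norm_num
    have hEq := ode_eqOn_of_C1 hz₀J hvC h₁ h₂ heq₀
    have hzJ : z ∈ Set.Ioo aJ bJ := by
      rw [haJ, hbJ]
      constructor
      · rw [max_lt_iff]; exact ⟨hz.1, by linarith [hz'.2]⟩
      · rw [lt_min_iff]; exact ⟨hz.2, by linarith [hz'.1]⟩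
    have := hEq hzJ
    rw [hγA, hγB] at this
    exact congrArg Prod.fst this
  have hpdz0 : ∀ p ∈ Set.Ioo (p₀ - δ) (p₀ + δ), pdz f p z₀ = 0 := by
    intro p hp
    rw [hpdzU (hmem (hδsub hp) hz₀)]
    exact hw0 p (hδsub hp)
  -- the extension
  set Δ : ℝ := max (z₂ - z₀) (z₀ - z₁) with hΔdef
  have hΔpos : 0 < Δ := lt_max_of_lt_left (by linarith [hz₀.2])
  have hzsub : Set.Ioo z₁ z₂ ⊆ Set.Ioo (z₀ - Δ) (z₀ + Δ) := by
    intro z hz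
    have h1 : z₀ - z₁ ≤ Δ := le_max_right _ _
    have h2 : z₂ - z₀ ≤ Δ := le_max_left _ _
    exact ⟨by linarith [hz.1], by linarith [hz.2]⟩
  have hcover : ∀ z ∈ Set.Ioo (z₀ - Δ) (z₀ + Δ), z ∉ Set.Ioo z₁ z₂ →
      2 * z₀ - z ∈ Set.Ioo z₁ z₂ := by
    intro z hz hznot
    simp only [Set.mem_Ioo, not_and_or, not_lt] at hznot
    rcases max_cases (z₂ - z₀) (z₀ - z₁) with ⟨hΔeq, hge⟩ | ⟨hΔeq, hge⟩ <;>
      rw [hΔdef] at * <;>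
      rcases hznot with h | h <;>
      constructor <;>
      simp only [Set.mem_Ioo] at hz <;>
      first
        | linarith [hz.1, hz.2, hz₀.1, hz₀.2, hΔeq]
        | nlinarith [hz.1, hz.2, hz₀.1, hz₀.2]
  set g : ℝ → ℝ → ℝ := fun p z => if z₁ < z ∧ z < z₂ then f p z else f p (2 * z₀ - z)
    with hgdef
  set R : Set (ℝ × ℝ) := Set.Ioo (p₀ - δ) (p₀ + δ) ×ˢ Set.Ioo (z₀ - Δ) (z₀ + Δ) with hRdef
  have hgf : ∀ p ∈ Set.Ioo (p₀ - δ) (p₀ + δ), ∀ z ∈ Set.Ioo z₁ z₂, g p z = f p z := by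
    intro p hp z hz
    rw [hgdef]
    simp only [if_pos (show z₁ < z ∧ z < z₂ from ⟨hz.1, hz.2⟩)]
  -- joint local identification of g away from the strip
  have hevj : ∀ p ∈ Set.Ioo (p₀ - δ) (p₀ + δ), ∀ z ∈ Set.Ioo (z₀ - Δ) (z₀ + Δ),
      z ∉ Set.Ioo z₁ z₂ →
      (fun v : ℝ × ℝ => g v.1 v.2) =ᶠ[𝓝 (p, z)] (fun v : ℝ × ℝ => f v.1 (2 * z₀ - v.2)) := by
    intro p hp z hz hznot
    have hζ : 2 * z₀ - z ∈ Set.Ioo z₁ z₂ := hcover z hz hznot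
    have hWopen : IsOpen (R ∩ ((Set.univ : Set ℝ) ×ˢ {t : ℝ | 2 * z₀ - t ∈ Set.Ioo z₁ z₂})) := by
      apply IsOpen.inter
      · exact isOpen_Ioo.prod isOpen_Ioo
      · exact isOpen_univ.prod (isOpen_Ioo.preimage (continuous_const.sub continuous_id))
    have hWmem : (p, z) ∈ R ∩ ((Set.univ : Set ℝ) ×ˢ {t : ℝ | 2 * z₀ - t ∈ Set.Ioo z₁ z₂}) :=
      ⟨⟨hp, hz⟩, ⟨Set.mem_univ _, hζ⟩⟩
    filter_upwards [hWopen.mem_nhds hWmem] with w hw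
    by_cases hw2 : z₁ < w.2 ∧ w.2 < z₂
    · have h1 : g w.1 w.2 = f w.1 w.2 := by rw [hgdef]; simp only [if_pos hw2]
      rw [h1]
      exact hsym w.1 hw.1.1 w.2 ⟨hw2.1, hw2.2⟩ hw.2.2
    · rw [hgdef]; simp only [if_neg hw2]
  have hgsmooth : ContDiffOn ℝ (⊤ : ℕ∞) (fun v : ℝ × ℝ => g v.1 v.2) R := by
    intro x hx
    apply ContDiffAt.contDiffWithinAt
    by_cases hzin : x.2 ∈ Set.Ioo z₁ z₂
    · apply (hf.contDiffAt (hDopen.mem_nhds (hmem (hδsub hx.1) hzin))).congr_of_eventuallyEq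
      filter_upwards [hDopen.mem_nhds (hmem (hδsub hx.1) hzin)] with w hw
      rw [hgdef]
      simp only [if_pos (show z₁ < w.2 ∧ w.2 < z₂ from ⟨hw.2.1, hw.2.2⟩)]
      rfl
    · have hζ := hcover x.2 hx.2 hzin
      have hρ : ContDiffAt ℝ (⊤ : ℕ∞) (fun v : ℝ × ℝ => ((v.1 : ℝ), 2 * z₀ - v.2)) x :=
        (contDiff_fst.prodMk (contDiff_const.sub contDiff_snd)).contDiffAt
      have hFat : ContDiffAt ℝ (⊤ : ℕ∞) F ((x.1 : ℝ), 2 * z₀ - x.2) :=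
        hf.contDiffAt (hDopen.mem_nhds (hmem (hδsub hx.1) hζ))
      have hcomp : ContDiffAt ℝ (⊤ : ℕ∞) (fun v : ℝ × ℝ => f v.1 (2 * z₀ - v.2)) x :=
        ContDiffAt.comp (g := F) x hFat hρ
      have hev := hevj x.1 hx.1 x.2 hx.2 hzin
      exact hcomp.congr_of_eventuallyEq hev
  have hval : ∀ p ∈ Set.Ioo (p₀ - δ) (p₀ + δ), ∀ z ∈ Set.Ioo (z₀ - Δ) (z₀ + Δ),
      Real.sqrt (β p) < g p z ∧
      ((g p z) ^ 2 - β p) * (pdp g p z) ^ 2 - α p * (1 + (pdz g p z) ^ 2) = 0 ∧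
      (g p z) ^ 2 * (ε * (g p z) ^ 2 + γ p) ^ 2 * (1 + (pdz g p z) ^ 2)
        - 4 * α p * ((g p z) ^ 2 - β p) = 0 := by
    intro p hp z hz
    have hpP : p ∈ Set.Ioo p₁ p₂ := hδsub hp
    by_cases hzin : z ∈ Set.Ioo z₁ z₂
    · have e0 : g p z = f p z := hgf p hp z hzin
      have ez : pdz g p z = pdz f p z := by
        apply Filter.EventuallyEq.deriv_eq
        filter_upwards [isOpen_Ioo.mem_nhds hzin] with t ht
        rw [hgdef]
        simp only [if_pos (show z₁ < t ∧ t < z₂ from ⟨ht.1, ht.2⟩)]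
      have ep : pdp g p z = pdp f p z := by
        apply Filter.EventuallyEq.deriv_eq
        apply Filter.Eventually.of_forall
        intro t
        rw [hgdef]
        simp only [if_pos (show z₁ < z ∧ z < z₂ from ⟨hzin.1, hzin.2⟩)]
      refine ⟨by rw [e0]; exact hfβ p hpP z hzin, ?_, ?_⟩
      · rw [e0, ez, ep]; exact heq1 p hpP z hzin
      · rw [e0, ez]; exact heq2 p hpP z hzin
    · have hζ : 2 * z₀ - z ∈ Set.Ioo z₁ z₂ := hcover z hz hzin
      have hznot' : ¬(z₁ < z ∧ z < z₂) := hzin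
      have e0 : g p z = f p (2 * z₀ - z) := by rw [hgdef]; simp only [if_neg hznot']
      have hDζ : (p, 2 * z₀ - z) ∈ D := hmem hpP hζ
      have hev2 : (fun t => g p t) =ᶠ[𝓝 z] (fun t => f p (2 * z₀ - t)) := by
        have htend : Filter.Tendsto (fun t : ℝ => ((p : ℝ), t)) (𝓝 z) (𝓝 (p, z)) :=
          (continuous_const.prodMk continuous_id).continuousAt
        exact (hevj p hp z hz hzin).comp_tendsto htend
      have hre : HasDerivAt (fun s : ℝ => 2 * z₀ - s) (-1) z := by
        simpa using (hasDerivAt_id z).const_sub (2 * z₀)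
      have hrefl : HasDerivAt (fun t => f p (2 * z₀ - t)) (U (p, 2 * z₀ - z) * (-1)) z :=
        (hfz hDζ).comp z hre
      have ez : pdz g p z = -(pdz f p (2 * z₀ - z)) := by
        rw [pdz, hev2.deriv_eq, hrefl.deriv, hpdzU hDζ]
        ring
      have ep : pdp g p z = pdp f p (2 * z₀ - z) := by
        apply Filter.EventuallyEq.deriv_eq
        apply Filter.Eventually.of_forall
        intro t
        rw [hgdef]
        simp only [if_neg hznot']
      refine ⟨by rw [e0]; exact hfβ p hpP _ hζ, ?_, ?_⟩
      · rw [e0, ez, ep]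
        linear_combination heq1 p hpP (2 * z₀ - z) hζ
      · rw [e0, ez]
        linear_combination heq2 p hpP (2 * z₀ - z) hζ
  exact ⟨δ, hδpos, hδsub, hsym, hpdz0, Δ, hΔpos, hzsub, g, hgsmooth, hgf, hval⟩
end
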